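/- arXiv:1607.00261 — 6 statements merged into one kernel-verified Lean document; each statement's English description precedes it below -/
import Mathlib

section
/- The function f : [0,1] → ℝ defined by f(x) = h(√(1 - x²)) is convex on the interval [0,1]. -/
open Matrix
open scoped ComplexOrder

noncomputable section

/-- The binary-entropy-type function `h(x) = -((1+x)/2)·log₂((1+x)/2) - ((1-x)/2)·log₂((1-x)/2)`
(with the convention `0·log₂ 0 = 0`, automatic since `Real.logb 2 0 = 0`). -/
def hFun (x : ℝ) : ℝ :=
  -(((1 + x) / 2) * Real.logb 2 ((1 + x) / 2)) - ((1 - x) / 2) * Real.logb 2 ((1 - x) / 2)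

/-- `g : [0,1] → [0,1]` is the inverse of `h` on `[0,1]`. -/
def gFun : ℝ → ℝ := Function.invFunOn hFun (Set.Icc 0 1)

/-- The (real) quadratic form `⟨v|M|v⟩`. -/
def qform {d : ℕ} (M : Matrix (Fin d) (Fin d) ℂ) (v : Fin d → ℂ) : ℝ :=
  (star v ⬝ᵥ M.mulVec v).re

/-- `v` is an orthonormal basis (family) of `ℂ^d`. -/
def IsONB {d : ℕ} (v : Fin d → Fin d → ℂ) : Prop :=
  ∀ i j, star (v i) ⬝ᵥ v j = if i = j then 1 else 0

/-- A POVM: a finite family of positive semidefinite matrices summing to the identity. -/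
def IsPOVM {d : ℕ} {ι : Type*} [Fintype ι] (M : ι → Matrix (Fin d) (Fin d) ℂ) : Prop :=
  (∀ m, (M m).PosSemidef) ∧ ∑ m, M m = 1

/-- A density matrix: positive semidefinite with trace 1. -/
def IsDensity {d : ℕ} (ρ : Matrix (Fin d) (Fin d) ℂ) : Prop :=
  ρ.PosSemidef ∧ ρ.trace = 1

/-- The noise `N(M,A) = -Σ_{m,a} p(m,a)·log₂(p(m,a)/p(m))` with `p(m,a) = (1/d)·⟨a|M_m|a⟩`
and `p(m) = (1/d)·Tr[M_m]`, for an observable `A` with orthonormal eigenbasis `v`. -/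
def noise {d : ℕ} {ι : Type*} [Fintype ι] (M : ι → Matrix (Fin d) (Fin d) ℂ)
    (v : Fin d → Fin d → ℂ) : ℝ :=
  -∑ m, ∑ a, ((1 / (d : ℝ)) * qform (M m) (v a)) *
      Real.logb 2 (((1 / (d : ℝ)) * qform (M m) (v a)) / ((1 / (d : ℝ)) * (M m).trace.re))

/-- `H(A|ρ) = -Σ_a ⟨a|ρ|a⟩·log₂⟨a|ρ|a⟩` for an observable with orthonormal eigenbasis `v`. -/
def Hobs {d : ℕ} (v : Fin d → Fin d → ℂ) (ρ : Matrix (Fin d) (Fin d) ℂ) : ℝ :=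
  -∑ a, qform ρ (v a) * Real.logb 2 (qform ρ (v a))

/-- Conditional Shannon entropy `H(X|Y) = -Σ_{x,y} p(x,y)·log₂(p(x,y)/p(y))` of a finite joint
distribution, conditioning on the second variable. -/
def condEnt {X Y : Type*} [Fintype X] [Fintype Y] (p : X → Y → ℝ) : ℝ :=
  -∑ x, ∑ y, p x y * Real.logb 2 (p x y / ∑ x', p x' y)

/-- Pauli matrix σ_x. -/
def σx : Matrix (Fin 2) (Fin 2) ℂ := !![0, 1; 1, 0]
/-- Pauli matrix σ_y. -/
def σy : Matrix (Fin 2) (Fin 2) ℂ := !![0, -Complex.I; Complex.I, 0]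
/-- Pauli matrix σ_z. -/
def σz : Matrix (Fin 2) (Fin 2) ℂ := !![1, 0; 0, -1]

/-- `v·σ = v₁σ_x + v₂σ_y + v₃σ_z` for `v ∈ ℝ³`. -/
def vecσ (v : Fin 3 → ℝ) : Matrix (Fin 2) (Fin 2) ℂ :=
  (v 0 : ℂ) • σx + (v 1 : ℂ) • σy + (v 2 : ℂ) • σz

/-- The canonical orthonormal eigenbasis of σ_z. -/
def basisZ : Fin 2 → Fin 2 → ℂ := fun i j => if i = j then 1 else 0

/-- The canonical orthonormal eigenbasis `|±x⟩` of σ_x. -/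
def basisX : Fin 2 → Fin 2 → ℂ := fun i =>
  ![((1 / Real.sqrt 2 : ℝ) : ℂ),
    if i = 0 then ((1 / Real.sqrt 2 : ℝ) : ℂ) else (-(1 / Real.sqrt 2 : ℝ) : ℂ)]

/-- Eigenvalues `+1, -1` of a (nondegenerate) Pauli observable. -/
def pmEig : Fin 2 → ℂ := fun i => if i = 0 then 1 else -1

end

noncomputable section StmtAux
open Real Set

noncomputable def sF (x : ℝ) : ℝ := Real.sqrt (1 - x^2)
noncomputable def FF (x : ℝ) : ℝ :=
  -((1 + sF x)/2 * Real.log ((1 + sF x)/2)) - (1 - sF x)/2 * Real.log ((1 - sF x)/2)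
noncomputable def F1 (x : ℝ) : ℝ :=
  x / (2 * sF x) * (Real.log ((1 + sF x)/2) - Real.log ((1 - sF x)/2))
noncomputable def F2 (x : ℝ) : ℝ :=
  (Real.log ((1 + sF x)/2) - Real.log ((1 - sF x)/2)) / (2 * (sF x)^3) - 1/(sF x)^2

lemma sF_pos {x : ℝ} (hx : x ∈ Ioo (0:ℝ) 1) : 0 < sF x := by
  have : (0:ℝ) < 1 - x^2 := by nlinarith [hx.1, hx.2]
  exact Real.sqrt_pos.2 this

lemma sF_lt_one {x : ℝ} (hx : x ∈ Ioo (0:ℝ) 1) : sF x < 1 := by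
  have h1 : 1 - x^2 < 1 := by nlinarith [hx.1]
  calc sF x < Real.sqrt 1 := by
        apply Real.sqrt_lt_sqrt (by nlinarith [hx.1, hx.2]) h1
    _ = 1 := Real.sqrt_one

lemma sF_sq {x : ℝ} (hx : x ∈ Ioo (0:ℝ) 1) : sF x ^ 2 = 1 - x ^ 2 := by
  have : (0:ℝ) ≤ 1 - x^2 := by nlinarith [hx.1, hx.2]
  exact Real.sq_sqrt this

lemma hasDerivAt_sF {x : ℝ} (hx : x ∈ Ioo (0:ℝ) 1) :
    HasDerivAt sF (-x / sF x) x := by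
  have h2 : (0:ℝ) < 1 - x^2 := by nlinarith [hx.1, hx.2]
  have hbase : HasDerivAt (fun x : ℝ => 1 - x^2) (-(2*x)) x := by
    simpa using ((hasDerivAt_pow 2 x).const_sub 1)
  have := (Real.hasDerivAt_sqrt h2.ne').comp x hbase
  refine this.congr_deriv ?_
  have hs := Real.sqrt_pos.2 h2
  unfold sF
  field_simp

lemma key_ineq {s : ℝ} (h0 : 0 ≤ s) (h1 : s < 1) :
    2 * s ≤ Real.log (1 + s) - Real.log (1 - s) := by
  set w : ℝ → ℝ := fun t => Real.log (1 + t) - Real.log (1 - t) - 2 * t with hw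
  have hmono : MonotoneOn w (Ico (0:ℝ) 1) := by
    apply monotoneOn_of_deriv_nonneg (convex_Ico 0 1)
    · apply ContinuousOn.sub
      apply ContinuousOn.sub
      · apply ContinuousOn.log (by fun_prop)
        intro t ht; simp only [mem_Ico] at ht; nlinarith [ht.1]
      · apply ContinuousOn.log (by fun_prop)
        intro t ht; simp only [mem_Ico] at ht; nlinarith [ht.2]
      · fun_prop
    · intro t ht
      rw [interior_Ico] at ht
      have h1t : (1:ℝ) + t ≠ 0 := by nlinarith [ht.1]
      have h2t : (1:ℝ) - t ≠ 0 := by nlinarith [ht.2]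
      have hd : HasDerivAt w (1/(1+t) - (-1)/(1-t) - 2) t := by
        apply HasDerivAt.sub
        apply HasDerivAt.sub
        · simpa [Function.comp_def] using (Real.hasDerivAt_log h1t).comp t ((hasDerivAt_id t).const_add 1)
        · have := (Real.hasDerivAt_log h2t).comp t ((hasDerivAt_id t).neg.const_add 1)
          simpa [div_eq_mul_inv, Function.comp_def] using this
        · simpa using (hasDerivAt_id t).const_mul 2
      exact hd.differentiableAt.differentiableWithinAt
    · intro t ht
      rw [interior_Ico] at ht
      have h1t : (0:ℝ) < 1 + t := by nlinarith [ht.1]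
      have h2t : (0:ℝ) < 1 - t := by nlinarith [ht.2]
      have hd : HasDerivAt w (1/(1+t) - (-1)/(1-t) - 2) t := by
        apply HasDerivAt.sub
        apply HasDerivAt.sub
        · simpa [Function.comp_def] using (Real.hasDerivAt_log h1t.ne').comp t ((hasDerivAt_id t).const_add 1)
        · have := (Real.hasDerivAt_log h2t.ne').comp t ((hasDerivAt_id t).neg.const_add 1)
          simpa [div_eq_mul_inv, Function.comp_def] using this
        · simpa using (hasDerivAt_id t).const_mul 2
      rw [hd.deriv]
      have hne : -1/(1-t) = -(1/(1-t)) := by ring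
      rw [hne]
      have key : (2:ℝ) ≤ 1/(1+t) + 1/(1-t) := by
        rw [div_add_div _ _ h1t.ne' h2t.ne', le_div_iff₀ (by nlinarith)]
        nlinarith [ht.1, ht.2]
      linarith [key]
  have := hmono (mem_Ico.2 ⟨le_refl 0, one_pos⟩) (mem_Ico.2 ⟨h0, h1⟩) h0
  simp only [hw] at this
  simp at this
  linarith [this]

lemma hasDerivAt_FF {x : ℝ} (hx : x ∈ Ioo (0:ℝ) 1) :
    HasDerivAt FF (F1 x) x := by
  have hs := sF_pos hx
  have hs1 := sF_lt_one hx
  have hp : (0:ℝ) < (1 + sF x)/2 := by linarith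
  have hq : (0:ℝ) < (1 - sF x)/2 := by linarith
  have hds := hasDerivAt_sF hx
  have hdp : HasDerivAt (fun x => (1 + sF x)/2) (-x / sF x / 2) x :=
    (hds.const_add 1).div_const 2
  have hdq : HasDerivAt (fun x => (1 - sF x)/2) (-(-x / sF x) / 2) x :=
    ((hds.neg).const_add 1).div_const 2
  have hA : HasDerivAt (fun x => (1 + sF x)/2 * Real.log ((1 + sF x)/2))
      ((Real.log ((1 + sF x)/2) + 1) * (-x / sF x / 2)) x :=
    by have := (Real.hasDerivAt_mul_log hp.ne').comp x hdp; exact this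
  have hB : HasDerivAt (fun x => (1 - sF x)/2 * Real.log ((1 - sF x)/2))
      ((Real.log ((1 - sF x)/2) + 1) * (-(-x / sF x) / 2)) x :=
    by have := (Real.hasDerivAt_mul_log hq.ne').comp x hdq; exact this
  have := (hA.neg).sub hB
  refine this.congr_deriv ?_
  unfold F1
  field_simp
  ring

lemma hasDerivAt_F1 {x : ℝ} (hx : x ∈ Ioo (0:ℝ) 1) :
    HasDerivAt F1 (F2 x) x := by
  have hs := sF_pos hx
  have hs1 := sF_lt_one hx
  have hsq := sF_sq hx
  have hp : (0:ℝ) < (1 + sF x)/2 := by linarith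
  have hq : (0:ℝ) < (1 - sF x)/2 := by linarith
  have hds := hasDerivAt_sF hx
  have hdp : HasDerivAt (fun x => (1 + sF x)/2) (-x / sF x / 2) x :=
    (hds.const_add 1).div_const 2
  have hdq : HasDerivAt (fun x => (1 - sF x)/2) (-(-x / sF x) / 2) x :=
    ((hds.neg).const_add 1).div_const 2
  -- derivative of x / (2 * sF x)
  have hden : HasDerivAt (fun x => 2 * sF x) (2 * (-x / sF x)) x := hds.const_mul 2
  have hd1 : HasDerivAt (fun x => x / (2 * sF x))
      ((1 * (2 * sF x) - x * (2 * (-x / sF x))) / (2 * sF x)^2) x :=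
    (hasDerivAt_id x).div hden (by positivity)
  -- derivative of log p - log q
  have hdu : HasDerivAt (fun x => Real.log ((1 + sF x)/2) - Real.log ((1 - sF x)/2))
      ((-x / sF x / 2) / ((1 + sF x)/2) - (-(-x / sF x) / 2) / ((1 - sF x)/2)) x := by
    apply HasDerivAt.sub
    · have := (Real.hasDerivAt_log hp.ne').comp x hdp
      simpa [div_eq_mul_inv, mul_comm, Function.comp_def] using this
    · have := (Real.hasDerivAt_log hq.ne').comp x hdq
      simpa [div_eq_mul_inv, mul_comm, Function.comp_def] using this
  have := hd1.mul hdu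
  have hx0 : x ≠ 0 := ne_of_gt hx.1
  have h1p : (1:ℝ) + sF x ≠ 0 := by linarith
  have h1q : (1:ℝ) - sF x ≠ 0 := by linarith
  have hA : (1 * (2 * sF x) - x * (2 * (-x / sF x))) / (2 * sF x)^2 = 1/(2 * sF x^3) := by
    field_simp
    linear_combination hsq
  have hB : x / (2 * sF x) * ((-x / sF x / 2) / ((1 + sF x)/2) - (-(-x / sF x) / 2) / ((1 - sF x)/2))
      = -(1 / sF x ^ 2) := by
    field_simp
    linear_combination (-2) * hsq
  rw [hA, hB] at this
  refine this.congr_deriv ?_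
  unfold F2
  ring

lemma continuous_FF : Continuous FF := by
  have hs : Continuous sF := by
    unfold sF
    exact Real.continuous_sqrt.comp (by fun_prop)
  have h1 : Continuous fun x => (1 + sF x)/2 := by fun_prop
  have h2 : Continuous fun x => (1 - sF x)/2 := by fun_prop
  have := ((Real.continuous_mul_log.comp h1).neg).sub (Real.continuous_mul_log.comp h2)
  exact this

lemma convexOn_FF : ConvexOn ℝ (Icc (0:ℝ) 1) FF := by
  apply convexOn_of_hasDerivWithinAt2_nonneg (convex_Icc 0 1) continuous_FF.continuousOn
      (f' := F1) (f'' := F2)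
  · intro x hx
    rw [interior_Icc] at hx
    exact (hasDerivAt_FF hx).hasDerivWithinAt
  · intro x hx
    rw [interior_Icc] at hx
    exact (hasDerivAt_F1 hx).hasDerivWithinAt
  · intro x hx
    rw [interior_Icc] at hx
    have hs := sF_pos hx
    have hs1 := sF_lt_one hx
    have hkey := key_ineq hs.le hs1
    have hlog : Real.log ((1 + sF x)/2) - Real.log ((1 - sF x)/2)
        = Real.log (1 + sF x) - Real.log (1 - sF x) := by
      rw [Real.log_div (by linarith) (by norm_num), Real.log_div (by linarith) (by norm_num)]
      ring
    unfold F2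
    rw [hlog]
    rw [sub_nonneg, div_le_div_iff₀ (by positivity) (by positivity)]
    calc 1 * (2 * sF x ^ 3) = (2 * sF x) * sF x ^ 2 := by ring
      _ ≤ (Real.log (1 + sF x) - Real.log (1 - sF x)) * sF x ^ 2 := by
          apply mul_le_mul_of_nonneg_right _ (by positivity)
          linarith [hkey]

end StmtAux

/-- The function `f(x) = h(√(1 - x²))` is convex on `[0,1]`. -/
theorem stmt_0 : ConvexOn ℝ (Set.Icc (0 : ℝ) 1) (fun x => hFun (Real.sqrt (1 - x ^ 2))) := by
  have heq : (fun x => hFun (Real.sqrt (1 - x ^ 2))) = fun x => (Real.log 2)⁻¹ • FF x := by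
    funext x
    unfold hFun FF sF Real.logb
    have hl2 : Real.log 2 ≠ 0 := (Real.log_pos one_lt_two).ne'
    simp only [smul_eq_mul]
    field_simp
  rw [heq]
  exact convexOn_FF.smul (by positivity)
end

section
/- Let A and B be nondegenerate observables on ℂ^d with orthonormal eigenbases (|a⟩)_a and (|b⟩)_b, and let E(A,B) = {(H(A|ρ), H(B|ρ)) : ρ a d×d density matrix} ⊆ ℝ². Then for every POVM (M_m)_m on ℂ^d, the pair (N(M,A), N(M,B)) lies in the convex hull of E(A,B). -/
open Matrix
open scoped ComplexOrder

section AuxStmt2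

open Matrix
open scoped ComplexOrder

private lemma aux_qform_nonneg {d : ℕ} {M : Matrix (Fin d) (Fin d) ℂ} (hM : M.PosSemidef)
    (v : Fin d → ℂ) : 0 ≤ qform M v := by
  simpa [qform] using hM.re_dotProduct_nonneg v

private lemma aux_qform_smul {d : ℕ} (c : ℝ) (M : Matrix (Fin d) (Fin d) ℂ) (v : Fin d → ℂ) :
    qform ((c : ℂ) • M) v = c * qform M v := by
  rw [qform, qform, Matrix.smul_mulVec, dotProduct_smul, smul_eq_mul]
  simp [Complex.mul_re]

private lemma aux_qform_zero {d : ℕ} (v : Fin d → ℂ) : qform (0 : Matrix (Fin d) (Fin d) ℂ) v = 0 := by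
  simp [qform]

private lemma aux_trace_key {d : ℕ} {M : Matrix (Fin d) (Fin d) ℂ} (hM : M.PosSemidef) :
    0 ≤ M.trace.re ∧ (M.trace.re = 0 → M = 0) := by
  obtain ⟨B, rfl⟩ : ∃ B : Matrix (Fin d) (Fin d) ℂ, M = Bᴴ * B := by
    open scoped MatrixOrder Matrix.Norms.L2Operator in
    exact CStarAlgebra.nonneg_iff_eq_star_mul_self.mp hM.nonneg
  have key : (Bᴴ * B).trace.re = ∑ j, ∑ i, Complex.normSq (B i j) := by
    have h1 : (Bᴴ * B).trace = ∑ j, ∑ i, (starRingEnd ℂ) (B i j) * B i j := by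
      simp [Matrix.trace, Matrix.diag, Matrix.mul_apply, Matrix.conjTranspose_apply]
    rw [h1, Complex.re_sum]
    refine Finset.sum_congr rfl fun j _ => ?_
    rw [Complex.re_sum]
    refine Finset.sum_congr rfl fun i _ => ?_
    simp [Complex.mul_re, Complex.normSq_apply]
  constructor
  · rw [key]
    exact Finset.sum_nonneg fun j _ => Finset.sum_nonneg fun i _ => Complex.normSq_nonneg _
  · intro h
    rw [key] at h
    have hB : B = 0 := by
      ext i j
      have h2 := (Finset.sum_eq_zero_iff_of_nonneg (fun j _ => Finset.sum_nonneg fun i _ => Complex.normSq_nonneg _)).mp h j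
        (Finset.mem_univ j)
      have h3 := (Finset.sum_eq_zero_iff_of_nonneg
        (fun i _ => Complex.normSq_nonneg _)).mp h2 i (Finset.mem_univ i)
      simpa using Complex.normSq_eq_zero.mp h3
    rw [hB]; simp

private lemma aux_smul_nonneg (r : ℝ) (hr : 0 ≤ r) (z : ℂ) (hz : 0 ≤ z) : 0 ≤ (r : ℂ) * z := by
  obtain ⟨hre, him⟩ := Complex.nonneg_iff.mp hz
  have hz' : z = ((z.re : ℝ) : ℂ) := Complex.ext rfl (by simp [him])
  rw [hz', ← Complex.ofReal_mul, Complex.zero_le_real]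
  positivity

private lemma aux_psd_smul {d : ℕ} {M : Matrix (Fin d) (Fin d) ℂ} (hM : M.PosSemidef)
    {c : ℝ} (hc : 0 ≤ c) : ((c : ℂ) • M).PosSemidef := by
  constructor
  · show ((c : ℂ) • M)ᴴ = (c : ℂ) • M
    rw [Matrix.conjTranspose_smul, hM.1.eq]
    simp [Complex.star_def, Complex.conj_ofReal]
  · intro x
    exact (hM.smul (show (0:ℂ) ≤ (c:ℂ) by exact_mod_cast hc)).2 x

private lemma aux_trace_real {d : ℕ} {M : Matrix (Fin d) (Fin d) ℂ} (hM : M.IsHermitian) :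
    ((M.trace.re : ℝ) : ℂ) = M.trace := by
  rw [Complex.conj_eq_iff_re.mp]
  have := congrArg Matrix.trace hM
  rwa [Matrix.trace_conjTranspose] at this

end AuxStmt2

/-- For every POVM `M` on `ℂ^d`, the pair `(N(M,A), N(M,B))` lies in the convex hull of the
entropic uncertainty region `E(A,B) = {(H(A|ρ), H(B|ρ)) : ρ density matrix}`. -/
theorem stmt_2 {d : ℕ} (hd : 0 < d) (vA vB : Fin d → Fin d → ℂ)
    (hA : IsONB vA) (hB : IsONB vB)
    {ι : Type*} [Fintype ι] (M : ι → Matrix (Fin d) (Fin d) ℂ) (hM : IsPOVM M) :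
    (noise M vA, noise M vB) ∈
      convexHull ℝ {x : ℝ × ℝ | ∃ ρ : Matrix (Fin d) (Fin d) ℂ,
        IsDensity ρ ∧ x = (Hobs vA ρ, Hobs vB ρ)} := by
  classical
  obtain ⟨hpsd, hsum⟩ := hM
  have hd' : (d : ℝ) ≠ 0 := Nat.cast_ne_zero.mpr hd.ne'
  set t : ι → ℝ := fun m => (M m).trace.re with ht
  have htnn : ∀ m, 0 ≤ t m := fun m => (aux_trace_key (hpsd m)).1
  set ρ : ι → Matrix (Fin d) (Fin d) ℂ := fun m =>
    if t m = 0 then ((d : ℝ)⁻¹ : ℂ) • 1 else (((t m)⁻¹ : ℝ) : ℂ) • M m with hρ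
  set w : ι → ℝ := fun m => t m / d with hw
  have hwnn : ∀ m, 0 ≤ w m := fun m => div_nonneg (htnn m) (by positivity)
  -- densities
  have hdens : ∀ m, IsDensity (ρ m) := by
    intro m
    by_cases h : t m = 0
    · have h1 : ((((d : ℝ)⁻¹ : ℝ) : ℂ) • (1 : Matrix (Fin d) (Fin d) ℂ)).PosSemidef :=
        aux_psd_smul Matrix.PosSemidef.one (by positivity)
      constructor
      · simpa [hρ, h] using h1
      · show (if t m = 0 then ((d : ℝ)⁻¹ : ℂ) • (1 : Matrix (Fin d) (Fin d) ℂ)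
            else (((t m)⁻¹ : ℝ) : ℂ) • M m).trace = 1
        rw [if_pos h, Matrix.trace_smul, Matrix.trace_one, smul_eq_mul]
        push_cast
        field_simp
        simp
    · have h1 : ((((t m)⁻¹ : ℝ) : ℂ) • M m).PosSemidef :=
        aux_psd_smul (hpsd m) (inv_nonneg.mpr (htnn m))
      constructor
      · simpa [hρ, h] using h1
      · show (if t m = 0 then ((d : ℝ)⁻¹ : ℂ) • (1 : Matrix (Fin d) (Fin d) ℂ)
            else (((t m)⁻¹ : ℝ) : ℂ) • M m).trace = 1
        rw [if_neg h, Matrix.trace_smul, smul_eq_mul, ← aux_trace_real (hpsd m).1,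
          ← Complex.ofReal_mul, inv_mul_cancel₀ h]
        norm_num
  -- weights sum to 1
  have hsumt : ∑ m, t m = (d : ℝ) := by
    have h1 : ∑ m, (M m).trace = (d : ℂ) := by
      rw [← Matrix.trace_sum, hsum, Matrix.trace_one]
      simp
    calc ∑ m, t m = (∑ m, (M m).trace).re := by rw [Complex.re_sum]
      _ = (d : ℝ) := by rw [h1]; simp
  have hsumw : ∑ m, w m = 1 := by
    rw [hw]
    rw [← Finset.sum_div, hsumt, div_self hd']
  -- key identity: noise = weighted sum of entropies
  have key : ∀ v : Fin d → Fin d → ℂ, noise M v = ∑ m, w m * Hobs v (ρ m) := by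
    intro v
    rw [noise, ← Finset.sum_neg_distrib]
    refine Finset.sum_congr rfl fun m _ => ?_
    by_cases h : t m = 0
    · have hz : M m = 0 := (aux_trace_key (hpsd m)).2 h
      simp [hz, aux_qform_zero, hw, h]
    · have hq : ∀ a, qform (ρ m) (v a) = (t m)⁻¹ * qform (M m) (v a) := by
        intro a
        simp only [hρ, if_neg h]
        exact aux_qform_smul _ _ _
      rw [Hobs]
      simp only [hq]
      rw [mul_neg, ← Finset.sum_neg_distrib, Finset.mul_sum, ← Finset.sum_neg_distrib]
      refine Finset.sum_congr rfl fun a _ => ?_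
      have harg : (1 / (d:ℝ) * qform (M m) (v a)) / (1 / (d:ℝ) * t m)
          = (t m)⁻¹ * qform (M m) (v a) := by
        field_simp
      have ht' : (M m).trace.re = t m := rfl
      have hw' : w m = t m / d := rfl
      rw [ht', harg, hw', neg_inj]
      field_simp
  -- assemble the convex combination
  set pts : ι → ℝ × ℝ := fun m => (Hobs vA (ρ m), Hobs vB (ρ m)) with hpts
  have hmem : ∀ m ∈ Finset.univ, pts m ∈ {x : ℝ × ℝ | ∃ ρ : Matrix (Fin d) (Fin d) ℂ,
      IsDensity ρ ∧ x = (Hobs vA ρ, Hobs vB ρ)} := fun m _ => ⟨ρ m, hdens m, rfl⟩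
  have hgoal : (noise M vA, noise M vB) = ∑ m, w m • pts m := by
    have h1 : (∑ m, w m • pts m).1 = ∑ m, w m * Hobs vA (ρ m) := by
      rw [Prod.fst_sum]; rfl
    have h2 : (∑ m, w m • pts m).2 = ∑ m, w m * Hobs vB (ρ m) := by
      rw [Prod.snd_sum]; rfl
    refine Prod.ext ?_ ?_
    · rw [h1]; exact key vA
    · rw [h2]; exact key vB
  rw [hgoal]
  have hcm := Finset.centerMass_mem_convexHull Finset.univ (fun m _ => hwnn m)
    (by rw [hsumw]; norm_num) hmem
  rwa [Finset.centerMass_eq_of_sum_1 _ _ hsumw] at hcm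
end

section
/- Let A and B be nondegenerate observables on ℂ^d with orthonormal eigenbases (|a⟩)_a and (|b⟩)_b. Then the set of noise pairs {(N(M,A), N(M,B)) : (M_m)_m a POVM on ℂ^d} equals the set {Σ_m p_m·(H(A|ρ_m), H(B|ρ_m)) : p_m ≥ 0, Σ_m p_m = 1, each ρ_m a d×d density matrix, and Σ_m p_m ρ_m = I/d}. -/
open Matrix
open scoped ComplexOrder

section AuxHelpers
variable {d : ℕ} {M : Matrix (Fin d) (Fin d) ℂ}

lemma qform_smul (c : ℝ) (M : Matrix (Fin d) (Fin d) ℂ) (v : Fin d → ℂ) :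
    qform ((c : ℂ) • M) v = c * qform M v := by
  simp [qform, smul_mulVec, Complex.re_ofReal_mul]

lemma psd_smul_real (h : M.PosSemidef) {c : ℝ} (hc : 0 ≤ c) :
    ((c : ℂ) • M).PosSemidef := by
  refine Matrix.PosSemidef.of_dotProduct_mulVec_nonneg ?_ ?_
  · unfold Matrix.IsHermitian
    rw [conjTranspose_smul, h.1.eq]
    simp [Complex.star_def]
  · intro x
    have h2 := h.dotProduct_mulVec_nonneg x
    rw [Complex.le_def] at h2 ⊢
    simp only [smul_mulVec, dotProduct_smul, smul_eq_mul, Complex.re_ofReal_mul,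
      Complex.im_ofReal_mul, Complex.zero_re, Complex.zero_im] at *
    exact ⟨mul_nonneg hc h2.1, by rw [← h2.2]; ring⟩

lemma psd_diag_nonneg (h : M.PosSemidef) (i : Fin d) : (0:ℂ) ≤ M i i := by
  have := h.dotProduct_mulVec_nonneg (Pi.single i 1)
  simpa [dotProduct, mulVec, Pi.single_apply, Finset.sum_ite_eq, mul_comm] using this

lemma psd_trace_re_nonneg (h : M.PosSemidef) : 0 ≤ M.trace.re := by
  have : M.trace.re = ∑ i, (M i i).re := by simp [Matrix.trace, Matrix.diag, Complex.re_sum]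
  rw [this]
  exact Finset.sum_nonneg fun i _ => ((Complex.le_def.mp (psd_diag_nonneg h i)).1)

lemma psd_trace_eq (h : M.PosSemidef) : M.trace = (M.trace.re : ℂ) := by
  have h1 : (starRingEnd ℂ) M.trace = M.trace := by
    conv_lhs => rw [show (starRingEnd ℂ) M.trace = star M.trace from rfl,
      ← Matrix.trace_conjTranspose, h.1.eq]
  exact (Complex.conj_eq_iff_re.mp h1).symm

lemma psd_eq_zero_of_trace (h : M.PosSemidef) (ht : M.trace.re = 0) : M = 0 := by
  exact h.trace_eq_zero_iff.mp (by rw [psd_trace_eq h, ht]; simp)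
  /-
  obtain ⟨B, rfl⟩ := Matrix.posSemidef_iff_eq_transpose_mul_self.mp h
  have htr : (Bᴴ * B).trace.re = ∑ i, ∑ j, Complex.normSq (B j i) := by
    simp only [Matrix.trace, Matrix.diag, Matrix.mul_apply, conjTranspose_apply]
    rw [Complex.re_sum]
    refine Finset.sum_congr rfl fun i _ => ?_
    rw [Complex.re_sum]
    refine Finset.sum_congr rfl fun j _ => ?_
    simp [mul_comm, Complex.star_def, Complex.mul_conj]
  rw [htr] at ht
  have hB : B = 0 := by
    ext j i
    have h1 : ∀ i ∈ Finset.univ, (0:ℝ) ≤ ∑ j, Complex.normSq (B j i) :=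
      fun i _ => Finset.sum_nonneg fun j _ => Complex.normSq_nonneg _
    have h2 := (Finset.sum_eq_zero_iff_of_nonneg h1).mp ht i (Finset.mem_univ i)
    have h3 := (Finset.sum_eq_zero_iff_of_nonneg
      (fun j _ => Complex.normSq_nonneg (B j i))).mp h2 j (Finset.mem_univ j)
    simpa using Complex.normSq_eq_zero.mp h3
  rw [hB]
  simp
  -/

lemma key_sum {n : ℕ} (w : ℝ) (q : Fin n → ℝ) :
    -∑ a, (w * q a) * Real.logb 2 ((w * q a) / w)
      = w * (-∑ a, q a * Real.logb 2 (q a)) := by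
  rcases eq_or_ne w 0 with h | h
  · simp [h]
  · have hc : ∀ a, (w * q a) / w = q a := fun a => by field_simp
    simp_rw [hc, mul_assoc, ← Finset.mul_sum, mul_neg]
end AuxHelpers


section AuxMain
open Matrix
open scoped ComplexOrder

lemma noise_term_eq {d : ℕ} (hd : 0 < d) (w : ℝ) (ρ N : Matrix (Fin d) (Fin d) ℂ)
    (hq : ∀ x, qform N x = ((d : ℝ) * w) * qform ρ x) (ht : N.trace.re = (d : ℝ) * w)
    (v : Fin d → Fin d → ℂ) :
    -∑ a, ((1 / (d : ℝ)) * qform N (v a)) *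
        Real.logb 2 (((1 / (d : ℝ)) * qform N (v a)) / ((1 / (d : ℝ)) * N.trace.re))
      = w * Hobs v ρ := by
  have hd' : (d : ℝ) ≠ 0 := Nat.cast_ne_zero.2 hd.ne'
  have h1 : ∀ x : ℝ, (1 / (d : ℝ)) * (((d : ℝ) * w) * x) = w * x := fun x => by
    field_simp
  have h2 : (1 / (d : ℝ)) * ((d : ℝ) * w) = w := by field_simp
  simp_rw [hq, ht, h1, h2]
  exact key_sum w fun a => qform ρ (v a)

lemma noise_eq_sum {d k : ℕ} (hd : 0 < d) (w : Fin k → ℝ)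
    (ρ N : Fin k → Matrix (Fin d) (Fin d) ℂ)
    (hq : ∀ m x, qform (N m) x = ((d : ℝ) * w m) * qform (ρ m) x)
    (ht : ∀ m, (N m).trace.re = (d : ℝ) * w m)
    (v : Fin d → Fin d → ℂ) :
    noise N v = ∑ m, w m * Hobs v (ρ m) := by
  unfold noise
  rw [← Finset.sum_neg_distrib]
  exact Finset.sum_congr rfl fun m _ => noise_term_eq hd (w m) (ρ m) (N m) (hq m) (ht m) v

end AuxMain

/-- The set of noise pairs `{(N(M,A), N(M,B)) : M a POVM on ℂ^d}` equals the set of points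
`Σ_m p_m·(H(A|ρ_m), H(B|ρ_m))` over finite weighted ensembles of density matrices satisfying
`Σ_m p_m ρ_m = I/d`. -/
theorem stmt_3 {d : ℕ} (hd : 0 < d) (vA vB : Fin d → Fin d → ℂ)
    (hA : IsONB vA) (hB : IsONB vB) :
    {x : ℝ × ℝ | ∃ (k : ℕ) (M : Fin k → Matrix (Fin d) (Fin d) ℂ),
        IsPOVM M ∧ x = (noise M vA, noise M vB)} =
    {x : ℝ × ℝ | ∃ (k : ℕ) (w : Fin k → ℝ) (ρ : Fin k → Matrix (Fin d) (Fin d) ℂ),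
        (∀ m, 0 ≤ w m) ∧ (∑ m, w m = 1) ∧ (∀ m, IsDensity (ρ m)) ∧
        (∑ m, (w m : ℂ) • ρ m = ((d : ℂ))⁻¹ • 1) ∧
        x = ∑ m, w m • (Hobs vA (ρ m), Hobs vB (ρ m))} := by
  have hd' : (d : ℝ) ≠ 0 := Nat.cast_ne_zero.2 hd.ne'
  have hdc : (d : ℂ) ≠ 0 := Nat.cast_ne_zero.2 hd.ne'
  have pair_sum : ∀ (k : ℕ) (w : Fin k → ℝ) (f g : Fin k → ℝ),
      (∑ m, w m • (f m, g m)) = (∑ m, w m * f m, ∑ m, w m * g m) := by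
    intro k w f g
    rw [Prod.ext_iff]
    constructor
    · rw [Prod.fst_sum]; simp [smul_eq_mul]
    · rw [Prod.snd_sum]; simp [smul_eq_mul]
  ext x
  simp only [Set.mem_setOf_eq]
  constructor
  · rintro ⟨k, M, ⟨hpsd, hsum⟩, rfl⟩
    set t : Fin k → ℝ := fun m => (M m).trace.re with ht_def
    have htn : ∀ m, 0 ≤ t m := fun m => psd_trace_re_nonneg (hpsd m)
    refine ⟨k, fun m => t m / d,
      fun m => if h : t m = 0 then (((d : ℝ)⁻¹ : ℝ) : ℂ) • 1
               else (((t m)⁻¹ : ℝ) : ℂ) • M m, ?_, ?_, ?_, ?_, ?_⟩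
    · exact fun m => div_nonneg (htn m) (by positivity)
    · have hts : ∑ m, t m = d := by
        have : ∑ m, (M m).trace = (d : ℂ) := by
          rw [← Matrix.trace_sum, hsum, Matrix.trace_one]
          simp
        have := congrArg Complex.re this
        rw [Complex.re_sum] at this
        simpa [ht_def] using this
      rw [← Finset.sum_div, hts, div_self hd']
    · intro m
      by_cases h : t m = 0
      · simp only [h, dif_pos]
        constructor
        · exact psd_smul_real Matrix.PosSemidef.one (by positivity)
        · rw [Matrix.trace_smul, Matrix.trace_one]
          simp only [smul_eq_mul]
          push_cast
          field_simp
          simp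
      · simp only [h, dif_neg, not_false_iff]
        constructor
        · exact psd_smul_real (hpsd m) (inv_nonneg.mpr (htn m))
        · rw [Matrix.trace_smul, psd_trace_eq (hpsd m)]
          simp only [smul_eq_mul, ← ht_def]
          rw [← Complex.ofReal_mul, inv_mul_cancel₀ h]
          simp
    · have key : ∀ m, ((t m / d : ℝ) : ℂ) •
          (if h : t m = 0 then (((d : ℝ)⁻¹ : ℝ) : ℂ) • (1 : Matrix (Fin d) (Fin d) ℂ)
           else (((t m)⁻¹ : ℝ) : ℂ) • M m) = (d : ℂ)⁻¹ • M m := by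
        intro m
        by_cases h : t m = 0
        · simp only [h, dif_pos]
          have hM0 : M m = 0 := psd_eq_zero_of_trace (hpsd m) h
          rw [hM0]
          simp [h]
        · simp only [h, dif_neg, not_false_iff, smul_smul]
          congr 1
          rw [← Complex.ofReal_mul,
            show t m / (d : ℝ) * (t m)⁻¹ = (d : ℝ)⁻¹ from by (field_simp)]
          push_cast
          ring
      rw [Finset.sum_congr rfl fun m _ => key m, ← Finset.smul_sum, hsum]
    · have hq : ∀ m x, qform (M m) x = ((d : ℝ) * (t m / d)) *
          qform (if h : t m = 0 then (((d : ℝ)⁻¹ : ℝ) : ℂ) • (1 : Matrix (Fin d) (Fin d) ℂ)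
                 else (((t m)⁻¹ : ℝ) : ℂ) • M m) x := by
        intro m x
        rw [mul_div_cancel₀ _ hd']
        by_cases h : t m = 0
        · have hM0 : M m = 0 := psd_eq_zero_of_trace (hpsd m) h
          rw [hM0, h]
          simp [qform]
        · simp only [h, dif_neg, not_false_iff, qform_smul]
          rw [← mul_assoc, mul_inv_cancel₀ h, one_mul]
      have ht2 : ∀ m, (M m).trace.re = (d : ℝ) * (t m / d) := fun m => by
        rw [mul_div_cancel₀ _ hd']
      rw [noise_eq_sum hd _ _ M hq ht2 vA, noise_eq_sum hd _ _ M hq ht2 vB]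
      exact (pair_sum _ _ _ _).symm
  · rintro ⟨k, w, ρ, hw, hsum1, hρ, hmix, rfl⟩
    refine ⟨k, fun m => (((d : ℝ) * w m : ℝ) : ℂ) • ρ m, ⟨?_, ?_⟩, ?_⟩
    · exact fun m => psd_smul_real (hρ m).1 (mul_nonneg (by positivity) (hw m))
    · have : ∀ m, (((d : ℝ) * w m : ℝ) : ℂ) • ρ m = (d : ℂ) • ((w m : ℂ) • ρ m) := by
        intro m
        rw [smul_smul]
        push_cast
        ring_nf
      rw [Finset.sum_congr rfl fun m _ => this m, ← Finset.smul_sum, hmix, smul_smul,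
        mul_inv_cancel₀ hdc, one_smul]
    · have hq : ∀ m x, qform ((((d : ℝ) * w m : ℝ) : ℂ) • ρ m) x
          = ((d : ℝ) * w m) * qform (ρ m) x := fun m x => qform_smul _ _ _
      have ht2 : ∀ m, ((((d : ℝ) * w m : ℝ) : ℂ) • ρ m).trace.re = (d : ℝ) * w m := by
        intro m
        rw [Matrix.trace_smul, (hρ m).2]
        simp
      rw [noise_eq_sum hd _ _ _ hq ht2 vA, noise_eq_sum hd _ _ _ hq ht2 vB]
      exact pair_sum _ _ _ _
end

section
/- Let A and B be nondegenerate observables on ℂ^d with orthonormal eigenbases (|a⟩)_a and (|b⟩)_b. Let a quantum instrument be given by Kraus operators K_{m,i} (d×d complex matrices, m in a finite outcome set, i a finite index) with Σ_{m,i} K_{m,i}† K_{m,i} = I, with induced POVM M_m = Σ_i K_{m,i}† K_{m,i}, and let correction channels be given by Kraus operators L_{m,j} with Σ_j L_{m,j}† L_{m,j} = I for each m. Define the corrected disturbance D_E(M,B) as the conditional Shannon entropy H(𝔹|𝔹') of the joint distribution p(b,b') = (1/d)·Σ_{m,i,j} |⟨b'| L_{m,j} K_{m,i} |b⟩|². Then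 the family M' indexed by pairs (m,b') with elements M'_{m,b'} = Σ_{i,j} K_{m,i}† L_{m,j}† |b'⟩⟨b'| L_{m,j} K_{m,i} is a POVM on ℂ^d, and it satisfies N(M',A) ≤ N(M,A) and N(M',B) ≤ D_E(M,B). -/
open Matrix
open scoped ComplexOrder

section Helpers
open Matrix
open scoped ComplexOrder

lemma sum_comm13 {A B C M : Type*} [Fintype A] [Fintype B] [Fintype C] [AddCommMonoid M]
    (f : A → B → C → M) : ∑ a, ∑ b, ∑ c, f a b c = ∑ c, ∑ b, ∑ a, f a b c := by
  calc ∑ a, ∑ b, ∑ c, f a b c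
      = ∑ a, ∑ c, ∑ b, f a b c := Finset.sum_congr rfl fun _ _ => Finset.sum_comm
    _ = ∑ c, ∑ a, ∑ b, f a b c := Finset.sum_comm
    _ = ∑ c, ∑ b, ∑ a, f a b c := Finset.sum_congr rfl fun _ _ => Finset.sum_comm


lemma key_ent {X Y Z : Type*} [Fintype X] [Fintype Y] [Fintype Z]
    (p : X → Y → Z → ℝ) (hp : ∀ x y z, 0 ≤ p x y z) :
    -∑ x, ∑ y, ∑ z, p x y z * Real.logb 2 (p x y z / ∑ x', p x' y z)
    ≤ -∑ x, ∑ z, (∑ y, p x y z) * Real.logb 2 ((∑ y, p x y z) / (∑ x', ∑ y, p x' y z)) := by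
  set q : X → Z → ℝ := fun x z => ∑ y, p x y z with hq
  set t : Y → Z → ℝ := fun y z => ∑ x, p x y z with ht
  set s : Z → ℝ := fun z => ∑ x, q x z with hs
  have hq0 : ∀ x z, 0 ≤ q x z := fun x z => Finset.sum_nonneg fun y _ => hp x y z
  have ht0 : ∀ y z, 0 ≤ t y z := fun y z => Finset.sum_nonneg fun x _ => hp x y z
  have hs0 : ∀ z, 0 ≤ s z := fun z => Finset.sum_nonneg fun x _ => hq0 x z
  have hlog2 : (0:ℝ) < Real.log 2 := Real.log_pos (by norm_num)
  rw [neg_le_neg_iff]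
  have hcoarse : ∑ x, ∑ z, q x z * Real.logb 2 (q x z / s z)
      = ∑ x, ∑ y, ∑ z, p x y z * Real.logb 2 (q x z / s z) := by
    refine Finset.sum_congr rfl fun x _ => ?_
    rw [Finset.sum_comm]
    exact Finset.sum_congr rfl fun z _ => by rw [hq]; simp [Finset.sum_mul]
  have hz : ∀ z, ∑ x, ∑ y, (q x z * t y z / s z - p x y z) = 0 := by
    intro z
    have hts : ∑ y, t y z = s z := by
      rw [ht, hs]; exact Finset.sum_comm
    have h1 : ∑ x, ∑ y, q x z * t y z / s z = s z * s z / s z := by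
      have h1' : ∀ x, ∑ y, q x z * t y z / s z = q x z * s z / s z := fun x => by
        rw [← Finset.sum_div, ← Finset.mul_sum, hts]
      rw [Finset.sum_congr rfl fun x _ => h1' x, ← Finset.sum_div, ← Finset.sum_mul]
    have h2 : ∑ x, ∑ y, p x y z = s z := rfl
    simp only [Finset.sum_sub_distrib, h1, h2]
    rcases eq_or_ne (s z) 0 with h | h
    · simp [h]
    · field_simp
      ring
  have hzero : ∑ x, ∑ y, ∑ z, (q x z * t y z / s z - p x y z) / Real.log 2 = 0 := by
    have hswap : ∑ x, ∑ y, ∑ z, (q x z * t y z / s z - p x y z) / Real.log 2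
        = ∑ z, ∑ x, ∑ y, (q x z * t y z / s z - p x y z) / Real.log 2 :=
      calc ∑ x, ∑ y, ∑ z, (q x z * t y z / s z - p x y z) / Real.log 2
          = ∑ x, ∑ z, ∑ y, (q x z * t y z / s z - p x y z) / Real.log 2 :=
            Finset.sum_congr rfl fun _ _ => Finset.sum_comm
        _ = ∑ z, ∑ x, ∑ y, (q x z * t y z / s z - p x y z) / Real.log 2 :=
            Finset.sum_comm
    rw [hswap]
    refine Finset.sum_eq_zero fun z _ => ?_
    have : ∑ x, ∑ y, (q x z * t y z / s z - p x y z) / Real.log 2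
        = (∑ x, ∑ y, (q x z * t y z / s z - p x y z)) / Real.log 2 := by
      rw [Finset.sum_div]
      exact Finset.sum_congr rfl fun x _ => (Finset.sum_div _ _ _).symm
    rw [this, hz z, zero_div]
  calc ∑ x, ∑ z, q x z * Real.logb 2 (q x z / s z)
      = ∑ x, ∑ y, ∑ z, p x y z * Real.logb 2 (q x z / s z) := hcoarse
    _ ≤ ∑ x, ∑ y, ∑ z, (p x y z * Real.logb 2 (p x y z / t y z)
          + (q x z * t y z / s z - p x y z) / Real.log 2) := by
        apply Finset.sum_le_sum; intro x _
        apply Finset.sum_le_sum; intro y _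
        apply Finset.sum_le_sum; intro z _
        rcases eq_or_lt_of_le (hp x y z) with h0 | hpos
        · rw [← h0]
          simp only [zero_mul, zero_add, sub_zero]
          exact div_nonneg (div_nonneg (mul_nonneg (hq0 x z) (ht0 y z)) (hs0 z)) hlog2.le
        · have hqpos : 0 < q x z :=
            lt_of_lt_of_le hpos (Finset.single_le_sum (fun y _ => hp x y z) (Finset.mem_univ y))
          have htpos : 0 < t y z :=
            lt_of_lt_of_le hpos (Finset.single_le_sum (fun x _ => hp x y z) (Finset.mem_univ x))
          have hspos : 0 < s z :=
            lt_of_lt_of_le hqpos (Finset.single_le_sum (fun x _ => hq0 x z) (Finset.mem_univ x))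
          set r : ℝ := q x z * t y z / s z with hr
          have hrpos : 0 < r := div_pos (mul_pos hqpos htpos) hspos
          have hlogid : Real.logb 2 (q x z / s z) - Real.logb 2 (p x y z / t y z)
              = Real.log (r / p x y z) / Real.log 2 := by
            simp only [Real.logb]
            rw [div_sub_div_same]
            congr 1
            rw [Real.log_div (ne_of_gt hqpos) (ne_of_gt hspos),
                Real.log_div (ne_of_gt hpos) (ne_of_gt htpos),
                Real.log_div (ne_of_gt hrpos) (ne_of_gt hpos),
                hr, Real.log_div (by positivity) (ne_of_gt hspos),
                Real.log_mul (ne_of_gt hqpos) (ne_of_gt htpos)]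
            ring
          have hnum : p x y z * Real.log (r / p x y z) ≤ r - p x y z := by
            have hle : Real.log (r / p x y z) ≤ r / p x y z - 1 :=
              Real.log_le_sub_one_of_pos (div_pos hrpos hpos)
            calc p x y z * Real.log (r / p x y z)
                ≤ p x y z * (r / p x y z - 1) := by
                  exact mul_le_mul_of_nonneg_left hle hpos.le
              _ = r - p x y z := by field_simp
          have hstep : p x y z * (Real.logb 2 (q x z / s z) - Real.logb 2 (p x y z / t y z))
              ≤ (r - p x y z) / Real.log 2 := by
            rw [hlogid, mul_div_assoc']
            gcongr
          linarith [hstep]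
    _ = ∑ x, ∑ y, ∑ z, p x y z * Real.logb 2 (p x y z / t y z) := by
        simp only [Finset.sum_add_distrib, hzero, add_zero]

lemma psd_vecMulVec {d : ℕ} (c : Fin d → ℂ) : (Matrix.vecMulVec c (star c)).PosSemidef := by
  rw [Matrix.vecMulVec_eq (Fin 1)]
  have : Matrix.replicateCol (Fin 1) c = (Matrix.replicateRow (Fin 1) (star c))ᴴ := by
    rw [Matrix.conjTranspose_replicateRow, star_star]
  rw [this]
  exact Matrix.posSemidef_conjTranspose_mul_self _

lemma psd_finsum {d : ℕ} {ι : Type*} (s : Finset ι) (f : ι → Matrix (Fin d) (Fin d) ℂ)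
    (h : ∀ i ∈ s, (f i).PosSemidef) : (∑ i ∈ s, f i).PosSemidef := by
  classical
  induction s using Finset.induction with
  | empty => simpa using Matrix.PosSemidef.zero
  | insert _ _ hx ih =>
    rw [Finset.sum_insert hx]
    exact (h _ (Finset.mem_insert_self _ _)).add (ih fun i hi => h i (Finset.mem_insert_of_mem hi))


lemma onb_horth {d : ℕ} {v : Fin d → Fin d → ℂ} (h : IsONB v) (j k : Fin d) :
    ∑ a, (starRingEnd ℂ) (v a j) * v a k = if j = k then 1 else 0 := by
  have h1 : (Matrix.of v) * (Matrix.of v)ᴴ = 1 := by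
    ext i j
    simp only [Matrix.mul_apply, Matrix.conjTranspose_apply, Matrix.of_apply, Matrix.one_apply]
    have hh := h j i
    simp only [dotProduct, Pi.star_apply, RCLike.star_def] at hh
    rw [show (∑ x, v i x * star (v j x)) = ∑ x, (starRingEnd ℂ) (v j x) * v i x
      from Finset.sum_congr rfl fun k _ => mul_comm _ _, hh]
    simp [eq_comm]
  have h2 : (Matrix.of v)ᴴ * (Matrix.of v) = 1 := mul_eq_one_comm.mp h1
  have := congrFun (congrFun h2 j) k
  simpa [Matrix.mul_apply, Matrix.conjTranspose_apply, Matrix.one_apply] using this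

lemma onb_trace {d : ℕ} {v : Fin d → Fin d → ℂ} (h : IsONB v) (M : Matrix (Fin d) (Fin d) ℂ) :
    ∑ a, star (v a) ⬝ᵥ M.mulVec (v a) = M.trace := by
  have key : ∀ a, star (v a) ⬝ᵥ M.mulVec (v a)
      = ∑ j, ∑ k, (starRingEnd ℂ) (v a j) * v a k * M j k := by
    intro a
    simp only [dotProduct, Matrix.mulVec, dotProduct, Pi.star_apply, RCLike.star_def,
      Finset.mul_sum]
    exact Finset.sum_congr rfl fun j _ => Finset.sum_congr rfl fun k _ => by ring
  rw [Finset.sum_congr rfl fun a _ => key a]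
  rw [Finset.sum_comm]
  rw [Finset.sum_congr rfl fun j _ => Finset.sum_comm]
  have : ∀ j k, ∑ a, (starRingEnd ℂ) (v a j) * v a k * M j k
      = (if j = k then 1 else 0) * M j k := by
    intro j k; rw [← Finset.sum_mul, onb_horth h]
  simp only [Finset.sum_congr rfl fun j _ => Finset.sum_congr rfl fun k (_ : k ∈ Finset.univ) => this j k]
  simp [Matrix.trace, Matrix.diag, ite_mul]

lemma onb_complete {d : ℕ} {v : Fin d → Fin d → ℂ} (h : IsONB v) :
    ∑ a, Matrix.vecMulVec (v a) (star (v a)) = 1 := by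
  ext j k
  simp only [Matrix.sum_apply, Matrix.vecMulVec_apply, Pi.star_apply,
    RCLike.star_def, Matrix.one_apply]
  have := congrArg (starRingEnd ℂ) (onb_horth h j k)
  simpa [apply_ite, mul_comm] using this

lemma qform_nonneg {d : ℕ} {M : Matrix (Fin d) (Fin d) ℂ} (h : M.PosSemidef) (v : Fin d → ℂ) :
    0 ≤ qform M v := h.re_dotProduct_nonneg v

lemma qform_sum {d : ℕ} {ι : Type*} (s : Finset ι) (M : ι → Matrix (Fin d) (Fin d) ℂ)
    (v : Fin d → ℂ) : qform (∑ i ∈ s, M i) v = ∑ i ∈ s, qform (M i) v := by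
  classical
  induction s using Finset.induction with
  | empty => simp [qform]
  | insert _ _ hx ih =>
    rw [Finset.sum_insert hx, Finset.sum_insert hx, ← ih]
    simp [qform, Matrix.add_mulVec, dotProduct_add]

lemma qform_rank_one {d : ℕ} (w : Matrix (Fin d) (Fin d) ℂ) (c u : Fin d → ℂ) :
    qform (wᴴ * Matrix.vecMulVec c (star c) * w) u
      = ‖star c ⬝ᵥ w.mulVec u‖ ^ 2 := by
  rw [qform, Matrix.mul_assoc, ← Matrix.mulVec_mulVec, ← Matrix.mulVec_mulVec,
    Matrix.dotProduct_mulVec, ← Matrix.star_mulVec]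
  set y := w.mulVec u with hy
  set z := star c ⬝ᵥ y with hz
  have h1 : Matrix.vecMulVec c (star c) *ᵥ y = z • c := by
    ext i
    simp only [Matrix.mulVec, dotProduct, Matrix.vecMulVec_apply, Pi.smul_apply, smul_eq_mul, hz]
    rw [Finset.sum_mul]
    exact Finset.sum_congr rfl fun j _ => by simp; ring
  rw [h1, dotProduct_smul]
  have h2 : star y ⬝ᵥ c = (starRingEnd ℂ) z := by
    rw [hz]
    simp only [dotProduct, map_sum, _root_.map_mul, Pi.star_apply, RCLike.star_def, Complex.conj_conj]
    exact Finset.sum_congr rfl fun j _ => mul_comm _ _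
  rw [smul_eq_mul, h2, Complex.mul_conj]
  simp only [Complex.normSq_eq_norm_sq]
  norm_cast

end Helpers

/-- Given an instrument with Kraus operators `K_{m,i}`, correction channels with Kraus
operators `L_{m,j}`, induced POVM `M_m = Σ_i K_{m,i}† K_{m,i}` and corrected disturbance
`D_E(M,B) = H(𝔹|𝔹')` of `p(b,b') = (1/d)·Σ_{m,i,j} |⟨b'|L_{m,j}K_{m,i}|b⟩|²`, the family
`M'_{m,b'} = Σ_{i,j} K_{m,i}† L_{m,j}† |b'⟩⟨b'| L_{m,j} K_{m,i}` is a POVM with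
`N(M',A) ≤ N(M,A)` and `N(M',B) ≤ D_E(M,B)`. -/

theorem stmt_4 {d : ℕ} (hd : 0 < d) (vA vB : Fin d → Fin d → ℂ)
    (hA : IsONB vA) (hB : IsONB vB)
    {ι κ κ' : Type*} [Fintype ι] [Fintype κ] [Fintype κ']
    (K : ι → κ → Matrix (Fin d) (Fin d) ℂ)
    (hK : ∑ m, ∑ i, (K m i)ᴴ * K m i = 1)
    (L : ι → κ' → Matrix (Fin d) (Fin d) ℂ)
    (hL : ∀ m, ∑ j, (L m j)ᴴ * L m j = 1)
    (M : ι → Matrix (Fin d) (Fin d) ℂ)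
    (hMdef : ∀ m, M m = ∑ i, (K m i)ᴴ * K m i)
    (M' : ι × Fin d → Matrix (Fin d) (Fin d) ℂ)
    (hM'def : ∀ m b', M' (m, b') = ∑ i, ∑ j,
        (K m i)ᴴ * (L m j)ᴴ * vecMulVec (vB b') (star (vB b')) * (L m j * K m i)) :
    IsPOVM M' ∧
    noise M' vA ≤ noise M vA ∧
    noise M' vB ≤ condEnt (fun b b' : Fin d =>
      (1 / (d : ℝ)) * ∑ m, ∑ i, ∑ j,
        ‖star (vB b') ⬝ᵥ ((L m j * K m i).mulVec (vB b))‖ ^ 2) := by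
  classical
  have hdinv : (0:ℝ) ≤ 1 / d := by positivity
  have hM'w : ∀ m b', M' (m, b') = ∑ i, ∑ j,
      (L m j * K m i)ᴴ * Matrix.vecMulVec (vB b') (star (vB b')) * (L m j * K m i) := by
    intro m b'; rw [hM'def]
    exact Finset.sum_congr rfl fun i _ => Finset.sum_congr rfl fun j _ => by
      rw [Matrix.conjTranspose_mul]
  have psd' : ∀ mb : ι × Fin d, (M' mb).PosSemidef := by
    rintro ⟨m, b'⟩
    rw [hM'w]
    refine psd_finsum _ _ fun i _ => psd_finsum _ _ fun j _ => ?_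
    exact (psd_vecMulVec (vB b')).conjTranspose_mul_mul_same _
  have hsum : ∀ m, ∑ b', M' (m, b') = M m := by
    intro m
    rw [hMdef]
    calc ∑ b', M' (m, b')
        = ∑ b', ∑ i, ∑ j, (L m j * K m i)ᴴ * Matrix.vecMulVec (vB b') (star (vB b'))
            * (L m j * K m i) := Finset.sum_congr rfl fun b' _ => hM'w m b'
      _ = ∑ i, ∑ b', ∑ j, (L m j * K m i)ᴴ * Matrix.vecMulVec (vB b') (star (vB b'))
            * (L m j * K m i) := Finset.sum_comm
      _ = ∑ i, ∑ j, ∑ b', (L m j * K m i)ᴴ * Matrix.vecMulVec (vB b') (star (vB b'))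
            * (L m j * K m i) := Finset.sum_congr rfl fun _ _ => Finset.sum_comm
      _ = ∑ i, ∑ j, (L m j * K m i)ᴴ * (L m j * K m i) := by
          refine Finset.sum_congr rfl fun i _ => Finset.sum_congr rfl fun j _ => ?_
          rw [← Finset.sum_mul, ← Finset.mul_sum, onb_complete hB, mul_one]
      _ = ∑ i, (K m i)ᴴ * K m i := by
          refine Finset.sum_congr rfl fun i _ => ?_
          have e : ∀ j, (L m j * K m i)ᴴ * (L m j * K m i)
              = (K m i)ᴴ * (((L m j)ᴴ * L m j) * K m i) := by
            intro j; simp only [Matrix.conjTranspose_mul, Matrix.mul_assoc]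
          rw [Finset.sum_congr rfl fun j _ => e j, ← Finset.mul_sum, ← Finset.sum_mul, hL,
            one_mul]
  have hPOVM : IsPOVM M' := by
    refine ⟨psd', ?_⟩
    rw [Fintype.sum_prod_type, Finset.sum_congr rfl fun m _ => hsum m,
      Finset.sum_congr rfl fun m (_ : m ∈ Finset.univ) => hMdef m]
    exact hK
  have tr_re : ∀ (v : Fin d → Fin d → ℂ), IsONB v → ∀ N : Matrix (Fin d) (Fin d) ℂ,
      N.trace.re = ∑ a, qform N (v a) := by
    intro v hv N
    rw [← onb_trace hv N, Complex.re_sum]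
    rfl
  refine ⟨hPOVM, ?_, ?_⟩
  · -- noise M' vA ≤ noise M vA
    set pA : Fin d → Fin d → ι → ℝ :=
      fun a b' m => (1 / (d : ℝ)) * qform (M' (m, b')) (vA a) with hpA
    have pA0 : ∀ a b' m, 0 ≤ pA a b' m :=
      fun a b' m => mul_nonneg hdinv (qform_nonneg (psd' (m, b')) _)
    have keyA := key_ent pA pA0
    have hden : ∀ m b', (1 / (d : ℝ)) * (M' (m, b')).trace.re = ∑ a', pA a' b' m := by
      intro m b'; rw [tr_re vA hA, Finset.mul_sum]
    have hA1 : noise M' vA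
        = -∑ a, ∑ b', ∑ m, pA a b' m * Real.logb 2 (pA a b' m / ∑ a', pA a' b' m) := by
      rw [noise, Fintype.sum_prod_type]
      congr 1
      calc ∑ m, ∑ b', ∑ a, (1 / (d:ℝ) * qform (M' (m, b')) (vA a)) *
              Real.logb 2 ((1 / (d:ℝ) * qform (M' (m, b')) (vA a)) /
                (1 / (d:ℝ) * (M' (m, b')).trace.re))
          = ∑ m, ∑ b', ∑ a, pA a b' m * Real.logb 2 (pA a b' m / ∑ a', pA a' b' m) := by
            refine Finset.sum_congr rfl fun m _ => Finset.sum_congr rfl fun b' _ =>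
              Finset.sum_congr rfl fun a _ => ?_
            rw [hden m b']
        _ = ∑ a, ∑ b', ∑ m, pA a b' m * Real.logb 2 (pA a b' m / ∑ a', pA a' b' m) :=
            sum_comm13 _
    have hMq : ∀ m a, (1 / (d:ℝ)) * qform (M m) (vA a) = ∑ b', pA a b' m := by
      intro m a; rw [← hsum m, qform_sum, Finset.mul_sum]
    have hMden : ∀ m, (1 / (d:ℝ)) * (M m).trace.re = ∑ a', ∑ b', pA a' b' m := by
      intro m
      rw [tr_re vA hA, Finset.mul_sum]
      exact Finset.sum_congr rfl fun a _ => hMq m a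
    have hA2 : noise M vA
        = -∑ a, ∑ m, (∑ b', pA a b' m) * Real.logb 2
            ((∑ b', pA a b' m) / (∑ a', ∑ b', pA a' b' m)) := by
      rw [noise]
      congr 1
      rw [Finset.sum_comm]
      refine Finset.sum_congr rfl fun a _ => Finset.sum_congr rfl fun m _ => ?_
      rw [hMq m a, hMden m]
    rw [hA1, hA2]
    exact keyA
  · -- noise M' vB ≤ condEnt ...
    set pB : Fin d → ι → Fin d → ℝ :=
      fun b m b' => (1 / (d : ℝ)) * qform (M' (m, b')) (vB b) with hpB
    have pB0 : ∀ b m b', 0 ≤ pB b m b' :=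
      fun b m b' => mul_nonneg hdinv (qform_nonneg (psd' (m, b')) _)
    have keyB := key_ent pB pB0
    have hden : ∀ m b', (1 / (d : ℝ)) * (M' (m, b')).trace.re = ∑ b'', pB b'' m b' := by
      intro m b'; rw [tr_re vB hB, Finset.mul_sum]
    have hB1 : noise M' vB
        = -∑ b, ∑ m, ∑ b', pB b m b' * Real.logb 2 (pB b m b' / ∑ b'', pB b'' m b') := by
      rw [noise, Fintype.sum_prod_type]
      congr 1
      calc ∑ m, ∑ b', ∑ b, (1 / (d:ℝ) * qform (M' (m, b')) (vB b)) *
              Real.logb 2 ((1 / (d:ℝ) * qform (M' (m, b')) (vB b)) /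
                (1 / (d:ℝ) * (M' (m, b')).trace.re))
          = ∑ m, ∑ b', ∑ b, pB b m b' * Real.logb 2 (pB b m b' / ∑ b'', pB b'' m b') := by
            refine Finset.sum_congr rfl fun m _ => Finset.sum_congr rfl fun b' _ =>
              Finset.sum_congr rfl fun b _ => ?_
            rw [hden m b']
        _ = ∑ b, ∑ b', ∑ m, pB b m b' * Real.logb 2 (pB b m b' / ∑ b'', pB b'' m b') :=
            sum_comm13 _
        _ = ∑ b, ∑ m, ∑ b', pB b m b' * Real.logb 2 (pB b m b' / ∑ b'', pB b'' m b') :=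
            Finset.sum_congr rfl fun _ _ => Finset.sum_comm
    have hjoint : ∀ b b', (1 / (d:ℝ)) * ∑ m, ∑ i, ∑ j,
        ‖star (vB b') ⬝ᵥ ((L m j * K m i).mulVec (vB b))‖ ^ 2 = ∑ m, pB b m b' := by
      intro b b'
      rw [Finset.mul_sum]
      refine Finset.sum_congr rfl fun m _ => ?_
      congr 1
      rw [hM'w m b', qform_sum]
      refine (Finset.sum_congr rfl fun i _ => ?_).symm
      rw [qform_sum]
      exact Finset.sum_congr rfl fun j _ => qform_rank_one _ _ _
    have hB2 : condEnt (fun b b' : Fin d =>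
        (1 / (d : ℝ)) * ∑ m, ∑ i, ∑ j,
          ‖star (vB b') ⬝ᵥ ((L m j * K m i).mulVec (vB b))‖ ^ 2)
        = -∑ b, ∑ b', (∑ m, pB b m b') * Real.logb 2
            ((∑ m, pB b m b') / (∑ b'', ∑ m, pB b'' m b')) := by
      rw [condEnt]
      congr 1
      refine Finset.sum_congr rfl fun b _ => Finset.sum_congr rfl fun b' _ => ?_
      rw [hjoint b b', Finset.sum_congr rfl fun b'' (_ : b'' ∈ Finset.univ) => hjoint b'' b']
    rw [hB1, hB2]
    exact keyB
end

section
/- Let {M, I − M} be a dichotomic POVM on ℂ² (M positive semidefinite with I − M positive semidefinite). Then the noises with respect to the Pauli observables σ_z and σ_x satisfy g(N({M, I−M}, σ_z))² + g(N({M, I−M}, σ_x))² ≤ 1. -/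
open Matrix
open scoped ComplexOrder

noncomputable section AuxNUR

/-! ### Properties of `hFun` and `gFun` -/

lemma hFun_eq (x : ℝ) : hFun x = Real.binEntropy ((1 + x) / 2) / Real.log 2 := by
  unfold hFun Real.binEntropy Real.logb
  rw [Real.log_inv, Real.log_inv]
  have h : (1 : ℝ) - (1 + x) / 2 = (1 - x) / 2 := by ring
  rw [h]; ring

lemma hFun_even (x : ℝ) : hFun (-x) = hFun x := by
  unfold hFun
  have h1 : (1 + -x) / 2 = (1 - x) / 2 := by ring
  have h2 : (1 - -x) / 2 = (1 + x) / 2 := by ring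
  rw [h1, h2]; ring

lemma hFun_zero : hFun 0 = 1 := by
  have h : (1 + (0:ℝ)) / 2 = 2⁻¹ := by norm_num
  rw [hFun_eq, h, Real.binEntropy_two_inv, div_self (Real.log_pos one_lt_two).ne']

lemma hFun_one : hFun 1 = 0 := by
  have h : (1 + (1:ℝ)) / 2 = 1 := by norm_num
  rw [hFun_eq, h, Real.binEntropy_one, zero_div]

lemma hFun_nonneg {x : ℝ} (h0 : -1 ≤ x) (h1 : x ≤ 1) : 0 ≤ hFun x := by
  rw [hFun_eq]
  apply div_nonneg _ (Real.log_nonneg one_le_two)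
  exact Real.binEntropy_nonneg (by linarith) (by linarith)

lemma hFun_le_one (x : ℝ) : hFun x ≤ 1 := by
  rw [hFun_eq, div_le_one (Real.log_pos one_lt_two)]
  exact Real.binEntropy_le_log_two

lemma hFun_strictAntiOn : StrictAntiOn hFun (Set.Icc 0 1) := by
  intro a ha b hb hab
  rw [hFun_eq, hFun_eq, div_lt_div_iff_of_pos_right (Real.log_pos one_lt_two)]
  exact Real.binEntropy_strictAntiOn ⟨by linarith [ha.1], by linarith [ha.2]⟩
    ⟨by linarith [hb.1], by linarith [hb.2]⟩ (by linarith)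

lemma hFun_antitoneOn : AntitoneOn hFun (Set.Icc 0 1) :=
  hFun_strictAntiOn.antitoneOn

lemma hFun_continuous : Continuous hFun := by
  have h : hFun = fun x => Real.binEntropy ((1 + x) / 2) / Real.log 2 := funext hFun_eq
  rw [h]
  exact (Real.binEntropy_continuous.comp (by continuity)).div_const _

lemma abs_le_of_sq_le' {a b : ℝ} (hb : 0 ≤ b) (h : a ^ 2 ≤ b ^ 2) : |a| ≤ b := by
  calc |a| = Real.sqrt (a ^ 2) := (Real.sqrt_sq_eq_abs a).symm
    _ ≤ Real.sqrt (b ^ 2) := Real.sqrt_le_sqrt h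
    _ = b := Real.sqrt_sq hb

lemma hFun_abs (x : ℝ) : hFun x = hFun |x| := by
  rcases abs_choice x with h | h <;> rw [h]
  exact (hFun_even x).symm

/-- The key property of `gFun`: if `hFun s ≤ N ≤ 1` with `s ∈ [0,1]`, then `gFun N ^ 2 ≤ s ^ 2`. -/
lemma gFun_sq_le {N s : ℝ} (hN1 : N ≤ 1) (hs0 : 0 ≤ s) (hs1 : s ≤ 1)
    (hsN : hFun s ≤ N) : gFun N ^ 2 ≤ s ^ 2 := by
  have hN0 : 0 ≤ N := le_trans (hFun_nonneg (by linarith) hs1) hsN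
  have hIcc : N ∈ Set.Icc (hFun 1) (hFun 0) := by
    rw [hFun_one, hFun_zero]; exact ⟨hN0, hN1⟩
  have hmem : N ∈ hFun '' Set.Icc 0 1 :=
    intermediate_value_Icc' zero_le_one hFun_continuous.continuousOn hIcc
  obtain ⟨y, hy, hyN⟩ := hmem
  have hex : ∃ a ∈ Set.Icc (0:ℝ) 1, hFun a = N := ⟨y, hy, hyN⟩
  have h1 : gFun N ∈ Set.Icc (0:ℝ) 1 := Function.invFunOn_mem hex
  have h2 : hFun (gFun N) = N := Function.invFunOn_eq hex
  have hle : gFun N ≤ s := by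
    by_contra hlt
    push_neg at hlt
    have := hFun_strictAntiOn ⟨hs0, hs1⟩ h1 hlt
    linarith
  exact pow_le_pow_left₀ h1.1 hle 2

/-! ### One measurement-outcome part of the noise -/

/-- The contribution of one POVM element (with eigenbasis probabilities `p/2, q/2`
and total probability `T/2`) to the noise. -/
def Wn (p q T : ℝ) : ℝ :=
  -(1 / 2 * p * Real.logb 2 (1 / 2 * p / (1 / 2 * T))) -
    1 / 2 * q * Real.logb 2 (1 / 2 * q / (1 / 2 * T))

lemma Wn_eq {p q : ℝ} (h : p + q ≠ 0) :
    Wn p q (p + q) = (p + q) / 2 * hFun ((p - q) / (p + q)) := by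
  unfold Wn hFun
  have h1 : 1 / 2 * p / (1 / 2 * (p + q)) = (1 + (p - q) / (p + q)) / 2 := by
    field_simp; ring
  have h2 : 1 / 2 * q / (1 / 2 * (p + q)) = (1 - (p - q) / (p + q)) / 2 := by
    field_simp; ring
  rw [h1, h2]
  field_simp
  ring

lemma Wn_ge {p q T s : ℝ} (hp : 0 ≤ p) (hq : 0 ≤ q) (hT : p + q = T)
    (hs0 : 0 ≤ s) (hs1 : s ≤ 1) (hu : (p - q) ^ 2 ≤ s ^ 2 * T ^ 2) :
    T / 2 * hFun s ≤ Wn p q T := by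
  subst hT
  rcases (by linarith : (0:ℝ) ≤ p + q).eq_or_lt with h | h
  · have hp0 : p = 0 := by linarith
    have hq0 : q = 0 := by linarith
    subst hp0; subst hq0
    unfold Wn
    norm_num
  · rw [Wn_eq h.ne']
    apply mul_le_mul_of_nonneg_left _ (by linarith : (0:ℝ) ≤ (p + q) / 2)
    have habs : |(p - q) / (p + q)| ≤ s := by
      apply abs_le_of_sq_le' hs0
      rw [div_pow, div_le_iff₀ (by positivity)]
      linarith [hu]
    rw [hFun_abs ((p - q) / (p + q))]
    exact hFun_antitoneOn ⟨abs_nonneg _, habs.trans hs1⟩ ⟨hs0, hs1⟩ habs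

lemma Wn_le {p q T : ℝ} (hp : 0 ≤ p) (hq : 0 ≤ q) (hT : p + q = T) :
    Wn p q T ≤ T / 2 := by
  subst hT
  rcases (by linarith : (0:ℝ) ≤ p + q).eq_or_lt with h | h
  · have hp0 : p = 0 := by linarith
    have hq0 : q = 0 := by linarith
    subst hp0; subst hq0
    unfold Wn
    norm_num
  · rw [Wn_eq h.ne']
    calc (p + q) / 2 * hFun ((p - q) / (p + q)) ≤ (p + q) / 2 * 1 :=
          mul_le_mul_of_nonneg_left (hFun_le_one _) (by linarith)
      _ = (p + q) / 2 := mul_one _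

/-! ### Quadratic form computations -/

lemma qform_basisZ0 (N : Matrix (Fin 2) (Fin 2) ℂ) : qform N (basisZ 0) = (N 0 0).re := by
  simp [qform, basisZ, dotProduct, Matrix.mulVec, Fin.sum_univ_two]

lemma qform_basisZ1 (N : Matrix (Fin 2) (Fin 2) ℂ) : qform N (basisZ 1) = (N 1 1).re := by
  simp [qform, basisZ, dotProduct, Matrix.mulVec, Fin.sum_univ_two]

lemma sqrt2_mul_self : ((1 / Real.sqrt 2 : ℝ) : ℂ) * ((1 / Real.sqrt 2 : ℝ) : ℂ) = ((2:ℂ))⁻¹ := by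
  rw [← Complex.ofReal_mul]
  have h : (1 / Real.sqrt 2) * (1 / Real.sqrt 2) = (2:ℝ)⁻¹ := by
    rw [div_mul_div_comm, one_mul, Real.mul_self_sqrt (by norm_num : (0:ℝ) ≤ 2)]
    norm_num
  rw [h]
  norm_num

lemma qform_basisX0 (N : Matrix (Fin 2) (Fin 2) ℂ) :
    qform N (basisX 0) = ((N 0 0).re + (N 0 1).re + (N 1 0).re + (N 1 1).re) / 2 := by
  have hb : basisX 0 = ![((1 / Real.sqrt 2 : ℝ) : ℂ), ((1 / Real.sqrt 2 : ℝ) : ℂ)] := by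
    funext j; fin_cases j <;> simp [basisX]
  have key : star (basisX 0) ⬝ᵥ N.mulVec (basisX 0)
      = (2:ℂ)⁻¹ * (N 0 0 + N 0 1 + N 1 0 + N 1 1) := by
    rw [hb]
    simp only [dotProduct, Matrix.mulVec, Fin.sum_univ_two, Pi.star_apply,
      Matrix.cons_val_zero, Matrix.cons_val_one, Matrix.head_cons,
      Complex.star_def, Complex.conj_ofReal]
    linear_combination (N 0 0 + N 0 1 + N 1 0 + N 1 1) * sqrt2_mul_self
  have h2 : (2:ℂ)⁻¹ = (((2:ℝ)⁻¹ : ℝ) : ℂ) := by norm_num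
  unfold qform
  rw [key, h2, Complex.re_ofReal_mul]
  simp [Complex.add_re]
  ring

lemma qform_basisX1 (N : Matrix (Fin 2) (Fin 2) ℂ) :
    qform N (basisX 1) = ((N 0 0).re - (N 0 1).re - (N 1 0).re + (N 1 1).re) / 2 := by
  have hb : basisX 1 = ![((1 / Real.sqrt 2 : ℝ) : ℂ), -((1 / Real.sqrt 2 : ℝ) : ℂ)] := by
    funext j; fin_cases j <;> simp [basisX]
  have key : star (basisX 1) ⬝ᵥ N.mulVec (basisX 1)
      = (2:ℂ)⁻¹ * (N 0 0 - N 0 1 - N 1 0 + N 1 1) := by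
    rw [hb]
    simp only [dotProduct, Matrix.mulVec, Fin.sum_univ_two, Pi.star_apply,
      Matrix.cons_val_zero, Matrix.cons_val_one, Matrix.head_cons, star_neg, map_neg,
      Complex.star_def, Complex.conj_ofReal]
    linear_combination (N 0 0 - N 0 1 - N 1 0 + N 1 1) * sqrt2_mul_self
  have h2 : (2:ℂ)⁻¹ = (((2:ℝ)⁻¹ : ℝ) : ℂ) := by norm_num
  unfold qform
  rw [key, h2, Complex.re_ofReal_mul]
  simp [Complex.add_re, Complex.sub_re]
  ring

/-- The 2×2 positivity inequality: `(Re N₀₁)² ≤ N₀₀ N₁₁` for a PSD matrix. -/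
lemma offdiag_re_sq_le {N : Matrix (Fin 2) (Fin 2) ℂ} (hN : N.PosSemidef) :
    (N 0 1).re ^ 2 ≤ (N 0 0).re * (N 1 1).re := by
  have keyN : ∀ v, 0 ≤ qform N v := fun v => hN.re_dotProduct_nonneg v
  have h00 : 0 ≤ (N 0 0).re := by have := keyN (basisZ 0); rwa [qform_basisZ0] at this
  have h11 : 0 ≤ (N 1 1).re := by have := keyN (basisZ 1); rwa [qform_basisZ1] at this
  have h10 : N 1 0 = (starRingEnd ℂ) (N 0 1) := by
    have h := congr_fun (congr_fun hN.1 0) 1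
    rw [Matrix.conjTranspose_apply] at h
    calc N 1 0 = star (star (N 1 0)) := (star_star _).symm
      _ = (starRingEnd ℂ) (N 0 1) := by rw [h]; rfl
  have hcx : ∀ τ : ℝ, qform N ![-(τ:ℂ) * N 0 1, 1]
      = τ * τ * Complex.normSq (N 0 1) * (N 0 0).re
        - 2 * τ * Complex.normSq (N 0 1) + (N 1 1).re := by
    intro τ
    have key : star ![-(τ:ℂ) * N 0 1, 1] ⬝ᵥ N.mulVec ![-(τ:ℂ) * N 0 1, 1]
        = ((τ * τ * Complex.normSq (N 0 1) : ℝ) : ℂ) * N 0 0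
          - ((2 * τ * Complex.normSq (N 0 1) : ℝ) : ℂ) + N 1 1 := by
      simp only [dotProduct, Matrix.mulVec, Fin.sum_univ_two, Pi.star_apply,
        Matrix.cons_val_zero, Matrix.cons_val_one, Matrix.head_cons, star_mul', star_neg,
        star_one, Complex.star_def, Complex.conj_ofReal, h10, map_neg, _root_.map_mul, _root_.map_one]
      push_cast
      linear_combination ((τ:ℂ) * (τ:ℂ) * N 0 0 - 2 * (τ:ℂ)) * Complex.mul_conj (N 0 1)
    unfold qform
    rw [key]
    simp [Complex.add_re, Complex.sub_re, Complex.re_ofReal_mul]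
  have quad : ∀ τ : ℝ, 0 ≤ (Complex.normSq (N 0 1) * (N 0 0).re) * (τ * τ)
      + (-(2 * Complex.normSq (N 0 1))) * τ + (N 1 1).re := by
    intro τ
    have h := keyN ![-(τ:ℂ) * N 0 1, 1]
    rw [hcx τ] at h
    nlinarith [h]
  have hd := discrim_le_zero quad
  simp only [discrim] at hd
  have hn0 : 0 ≤ Complex.normSq (N 0 1) := Complex.normSq_nonneg _
  have hresq : (N 0 1).re ^ 2 ≤ Complex.normSq (N 0 1) := by
    rw [Complex.normSq_apply]
    nlinarith [sq_nonneg (N 0 1).im]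
  rcases hn0.eq_or_lt with h | h
  · have hz : (N 0 1).re ^ 2 ≤ 0 := by rw [h]; exact hresq
    exact le_trans hz (mul_nonneg h00 h11)
  · have hn : Complex.normSq (N 0 1) ≤ (N 0 0).re * (N 1 1).re := by nlinarith [hd, h]
    exact le_trans hresq hn

/-- Choice of the `s`-parameters. -/
lemma choose_s {uz ux m : ℝ} (hm : 0 ≤ m) (huz : 0 ≤ uz) (hux : 0 ≤ ux)
    (hsum : uz + ux ≤ m ^ 2) :
    ∃ sz sx : ℝ, 0 ≤ sz ∧ sz ≤ 1 ∧ 0 ≤ sx ∧ sx ≤ 1 ∧ sz ^ 2 + sx ^ 2 ≤ 1 ∧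
      uz ≤ sz ^ 2 * m ^ 2 ∧ ux ≤ sx ^ 2 * m ^ 2 := by
  rcases hm.eq_or_lt with h | h
  · refine ⟨0, 0, le_refl _, zero_le_one, le_refl _, zero_le_one, by norm_num, ?_, ?_⟩
    · nlinarith
    · nlinarith
  · refine ⟨Real.sqrt uz / m, Real.sqrt ux / m, by positivity, ?_, by positivity, ?_, ?_, ?_, ?_⟩
    all_goals
      have hz2 : (Real.sqrt uz / m) ^ 2 = uz / m ^ 2 := by
        rw [div_pow, Real.sq_sqrt huz]
      have hx2 : (Real.sqrt ux / m) ^ 2 = ux / m ^ 2 := by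
        rw [div_pow, Real.sq_sqrt hux]
      have hm2 : (0:ℝ) < m ^ 2 := by positivity
    · have h1 : (Real.sqrt uz / m) ^ 2 ≤ 1 := by
        rw [hz2, div_le_one hm2]; linarith
      have := abs_le_of_sq_le' zero_le_one (by simpa using h1)
      calc Real.sqrt uz / m = |Real.sqrt uz / m| := (abs_of_nonneg (by positivity)).symm
        _ ≤ 1 := this
    · have h1 : (Real.sqrt ux / m) ^ 2 ≤ 1 := by
        rw [hx2, div_le_one hm2]; linarith
      have := abs_le_of_sq_le' zero_le_one (by simpa using h1)
      calc Real.sqrt ux / m = |Real.sqrt ux / m| := (abs_of_nonneg (by positivity)).symm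
        _ ≤ 1 := this
    · rw [hz2, hx2, ← add_div, div_le_one hm2]; exact hsum
    · rw [hz2, div_mul_cancel₀ _ hm2.ne']
    · rw [hx2, div_mul_cancel₀ _ hm2.ne']

end AuxNUR

set_option maxHeartbeats 2000000 in
/-- For a dichotomic POVM `{M, I−M}` on `ℂ²`,
`g(N({M,I−M},σ_z))² + g(N({M,I−M},σ_x))² ≤ 1`. -/
theorem stmt_10 (M : Matrix (Fin 2) (Fin 2) ℂ) (hM : M.PosSemidef)
    (hM' : (1 - M).PosSemidef) :
    gFun (noise ![M, 1 - M] basisZ) ^ 2 + gFun (noise ![M, 1 - M] basisX) ^ 2 ≤ 1 := by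
  have keyM : ∀ v, 0 ≤ qform M v := fun v => hM.re_dotProduct_nonneg v
  have keyM' : ∀ v, 0 ≤ qform (1 - M) v := fun v => hM'.re_dotProduct_nonneg v
  -- Hermitian facts
  have hM10 : M 1 0 = (starRingEnd ℂ) (M 0 1) := by
    have h := congr_fun (congr_fun hM.1 0) 1
    rw [Matrix.conjTranspose_apply] at h
    calc M 1 0 = star (star (M 1 0)) := (star_star _).symm
      _ = (starRingEnd ℂ) (M 0 1) := by rw [h]; rfl
  have hM10re : (M 1 0).re = (M 0 1).re := by rw [hM10]; exact Complex.conj_re _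
  -- entries of 1 - M
  have e00 : ((1 - M) 0 0).re = 1 - (M 0 0).re := by
    simp [Matrix.sub_apply, Matrix.one_apply]
  have e11 : ((1 - M) 1 1).re = 1 - (M 1 1).re := by
    simp [Matrix.sub_apply, Matrix.one_apply]
  have e01 : ((1 - M) 0 1).re = -(M 0 1).re := by
    simp [Matrix.sub_apply, Matrix.one_apply, (by decide : (0 : Fin 2) ≠ 1)]
  have e10 : ((1 - M) 1 0).re = -(M 0 1).re := by
    simp [Matrix.sub_apply, Matrix.one_apply, (by decide : (1 : Fin 2) ≠ 0), hM10re]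
  -- diagonal bounds
  have hA0 : 0 ≤ (M 0 0).re := by have := keyM (basisZ 0); rwa [qform_basisZ0] at this
  have hB0 : 0 ≤ (M 1 1).re := by have := keyM (basisZ 1); rwa [qform_basisZ1] at this
  have hA1 : (M 0 0).re ≤ 1 := by
    have := keyM' (basisZ 0); rw [qform_basisZ0, e00] at this; linarith
  have hB1 : (M 1 1).re ≤ 1 := by
    have := keyM' (basisZ 1); rw [qform_basisZ1, e11] at this; linarith
  -- determinant bounds
  have hdet : (M 0 1).re ^ 2 ≤ (M 0 0).re * (M 1 1).re := offdiag_re_sq_le hM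
  have hdet' : (M 0 1).re ^ 2 ≤ (1 - (M 0 0).re) * (1 - (M 1 1).re) := by
    have h := offdiag_re_sq_le hM'
    rw [e00, e11, e01, neg_pow] at h
    simpa using h
  -- traces
  have trM : M.trace.re = (M 0 0).re + (M 1 1).re := by
    rw [Matrix.trace_fin_two, Complex.add_re]
  have trM' : (1 - M).trace.re = (1 - (M 0 0).re) + (1 - (M 1 1).re) := by
    rw [Matrix.trace_fin_two, Complex.add_re, e00, e11]
  -- q-form values in the X basis
  have qX0 : qform M (basisX 0) = ((M 0 0).re + (M 1 1).re) / 2 + (M 0 1).re := by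
    rw [qform_basisX0, hM10re]; ring
  have qX1 : qform M (basisX 1) = ((M 0 0).re + (M 1 1).re) / 2 - (M 0 1).re := by
    rw [qform_basisX1, hM10re]; ring
  have qX0' : qform (1 - M) (basisX 0)
      = ((1 - (M 0 0).re) + (1 - (M 1 1).re)) / 2 - (M 0 1).re := by
    rw [qform_basisX0, e00, e11, e01, e10]; ring
  have qX1' : qform (1 - M) (basisX 1)
      = ((1 - (M 0 0).re) + (1 - (M 1 1).re)) / 2 + (M 0 1).re := by
    rw [qform_basisX1, e00, e11, e01, e10]; ring
  -- the noises as sums of `Wn` terms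
  have noiseZ : noise ![M, 1 - M] basisZ
      = Wn ((M 0 0).re) ((M 1 1).re) ((M 0 0).re + (M 1 1).re)
        + Wn (1 - (M 0 0).re) (1 - (M 1 1).re) ((1 - (M 0 0).re) + (1 - (M 1 1).re)) := by
    simp only [noise, Fin.sum_univ_two, Matrix.cons_val_zero, Matrix.cons_val_one,
      Matrix.head_cons, qform_basisZ0, qform_basisZ1, trM, trM', e00, e11,
      Nat.cast_ofNat, Wn]
    ring
  have noiseX : noise ![M, 1 - M] basisX
      = Wn (((M 0 0).re + (M 1 1).re) / 2 + (M 0 1).re)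
            (((M 0 0).re + (M 1 1).re) / 2 - (M 0 1).re)
            ((M 0 0).re + (M 1 1).re)
        + Wn (((1 - (M 0 0).re) + (1 - (M 1 1).re)) / 2 - (M 0 1).re)
            (((1 - (M 0 0).re) + (1 - (M 1 1).re)) / 2 + (M 0 1).re)
            ((1 - (M 0 0).re) + (1 - (M 1 1).re)) := by
    simp only [noise, Fin.sum_univ_two, Matrix.cons_val_zero, Matrix.cons_val_one,
      Matrix.head_cons, qX0, qX1, qX0', qX1', trM, trM', Nat.cast_ofNat, Wn]
    ring
  -- nonnegativity of the X-basis probabilities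
  have pX0 : 0 ≤ ((M 0 0).re + (M 1 1).re) / 2 + (M 0 1).re := by
    have := keyM (basisX 0); rwa [qX0] at this
  have pX1 : 0 ≤ ((M 0 0).re + (M 1 1).re) / 2 - (M 0 1).re := by
    have := keyM (basisX 1); rwa [qX1] at this
  have pX0' : 0 ≤ ((1 - (M 0 0).re) + (1 - (M 1 1).re)) / 2 - (M 0 1).re := by
    have := keyM' (basisX 0); rwa [qX0'] at this
  have pX1' : 0 ≤ ((1 - (M 0 0).re) + (1 - (M 1 1).re)) / 2 + (M 0 1).re := by
    have := keyM' (basisX 1); rwa [qX1'] at this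
  -- the key square bounds
  have hkey1 : ((M 0 0).re - (M 1 1).re) ^ 2 + (2 * (M 0 1).re) ^ 2
      ≤ ((M 0 0).re + (M 1 1).re) ^ 2 := by nlinarith [hdet]
  have hkey2 : ((M 0 0).re - (M 1 1).re) ^ 2 + (2 * (M 0 1).re) ^ 2
      ≤ (2 - ((M 0 0).re + (M 1 1).re)) ^ 2 := by nlinarith [hdet']
  -- choose the parameters
  set m : ℝ := min ((M 0 0).re + (M 1 1).re) (2 - ((M 0 0).re + (M 1 1).re)) with hmdef
  have hm0 : 0 ≤ m := le_min (by linarith) (by linarith)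
  have hmT : m ≤ (M 0 0).re + (M 1 1).re := min_le_left _ _
  have hmT' : m ≤ 2 - ((M 0 0).re + (M 1 1).re) := min_le_right _ _
  have hmsq : m ^ 2 ≤ ((M 0 0).re + (M 1 1).re) ^ 2 := pow_le_pow_left₀ hm0 hmT 2
  have hmsq' : m ^ 2 ≤ (2 - ((M 0 0).re + (M 1 1).re)) ^ 2 := pow_le_pow_left₀ hm0 hmT' 2
  have hsum : ((M 0 0).re - (M 1 1).re) ^ 2 + (2 * (M 0 1).re) ^ 2 ≤ m ^ 2 := by
    rcases min_cases ((M 0 0).re + (M 1 1).re) (2 - ((M 0 0).re + (M 1 1).re)) with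
      ⟨hmeq, _⟩ | ⟨hmeq, _⟩ <;> rw [hmdef, hmeq]
    · exact hkey1
    · exact hkey2
  obtain ⟨sz, sx, hsz0, hsz1, hsx0, hsx1, hs_sum, huz, hux⟩ :=
    choose_s hm0 (by positivity) (by positivity) hsum
  -- bounds for the Z-noise
  have heq1 : ((1 - (M 0 0).re) - (1 - (M 1 1).re)) ^ 2 = ((M 0 0).re - (M 1 1).re) ^ 2 := by
    ring
  have heq2 : ((1 - (M 0 0).re) + (1 - (M 1 1).re)) ^ 2
      = (2 - ((M 0 0).re + (M 1 1).re)) ^ 2 := by ring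
  have hNz1 : noise ![M, 1 - M] basisZ ≤ 1 := by
    rw [noiseZ]
    have b1 := Wn_le hA0 hB0 rfl
    have b2 := Wn_le (by linarith : (0:ℝ) ≤ 1 - (M 0 0).re)
      (by linarith : (0:ℝ) ≤ 1 - (M 1 1).re) rfl
    calc _ ≤ ((M 0 0).re + (M 1 1).re) / 2 + ((1 - (M 0 0).re) + (1 - (M 1 1).re)) / 2 :=
          add_le_add b1 b2
      _ = 1 := by ring
  have hNz_ge : hFun sz ≤ noise ![M, 1 - M] basisZ := by
    rw [noiseZ]
    have b1 : ((M 0 0).re + (M 1 1).re) / 2 * hFun sz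
        ≤ Wn ((M 0 0).re) ((M 1 1).re) ((M 0 0).re + (M 1 1).re) := by
      apply Wn_ge hA0 hB0 rfl hsz0 hsz1
      exact huz.trans (mul_le_mul_of_nonneg_left hmsq (sq_nonneg sz))
    have b2 : ((1 - (M 0 0).re) + (1 - (M 1 1).re)) / 2 * hFun sz
        ≤ Wn (1 - (M 0 0).re) (1 - (M 1 1).re) ((1 - (M 0 0).re) + (1 - (M 1 1).re)) := by
      apply Wn_ge (by linarith) (by linarith) rfl hsz0 hsz1
      rw [heq1, heq2]
      exact huz.trans (mul_le_mul_of_nonneg_left hmsq' (sq_nonneg sz))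
    calc hFun sz = ((M 0 0).re + (M 1 1).re) / 2 * hFun sz
          + ((1 - (M 0 0).re) + (1 - (M 1 1).re)) / 2 * hFun sz := by ring
      _ ≤ _ := add_le_add b1 b2
  -- bounds for the X-noise
  have hNx1 : noise ![M, 1 - M] basisX ≤ 1 := by
    rw [noiseX]
    have b1 := Wn_le pX0 pX1
      (show (((M 0 0).re + (M 1 1).re) / 2 + (M 0 1).re)
        + (((M 0 0).re + (M 1 1).re) / 2 - (M 0 1).re) = (M 0 0).re + (M 1 1).re by ring)
    have b2 := Wn_le pX0' pX1'
      (show ((1 - (M 0 0).re + (1 - (M 1 1).re)) / 2 - (M 0 1).re)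
        + ((1 - (M 0 0).re + (1 - (M 1 1).re)) / 2 + (M 0 1).re)
        = (1 - (M 0 0).re) + (1 - (M 1 1).re) by ring)
    calc _ ≤ ((M 0 0).re + (M 1 1).re) / 2 + ((1 - (M 0 0).re) + (1 - (M 1 1).re)) / 2 :=
          add_le_add b1 b2
      _ = 1 := by ring
  have heq3 : ((((M 0 0).re + (M 1 1).re) / 2 + (M 0 1).re)
      - (((M 0 0).re + (M 1 1).re) / 2 - (M 0 1).re)) ^ 2 = (2 * (M 0 1).re) ^ 2 := by ring
  have heq4 : ((((1 - (M 0 0).re) + (1 - (M 1 1).re)) / 2 - (M 0 1).re)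
      - (((1 - (M 0 0).re) + (1 - (M 1 1).re)) / 2 + (M 0 1).re)) ^ 2
      = (2 * (M 0 1).re) ^ 2 := by ring
  have hNx_ge : hFun sx ≤ noise ![M, 1 - M] basisX := by
    rw [noiseX]
    have b1 : ((M 0 0).re + (M 1 1).re) / 2 * hFun sx
        ≤ Wn (((M 0 0).re + (M 1 1).re) / 2 + (M 0 1).re)
            (((M 0 0).re + (M 1 1).re) / 2 - (M 0 1).re)
            ((M 0 0).re + (M 1 1).re) := by
      apply Wn_ge pX0 pX1 (by ring) hsx0 hsx1
      rw [heq3]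
      exact hux.trans (mul_le_mul_of_nonneg_left hmsq (sq_nonneg sx))
    have b2 : ((1 - (M 0 0).re) + (1 - (M 1 1).re)) / 2 * hFun sx
        ≤ Wn (((1 - (M 0 0).re) + (1 - (M 1 1).re)) / 2 - (M 0 1).re)
            (((1 - (M 0 0).re) + (1 - (M 1 1).re)) / 2 + (M 0 1).re)
            ((1 - (M 0 0).re) + (1 - (M 1 1).re)) := by
      apply Wn_ge pX0' pX1' (by ring) hsx0 hsx1
      rw [heq4, heq2]
      exact hux.trans (mul_le_mul_of_nonneg_left hmsq' (sq_nonneg sx))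
    calc hFun sx = ((M 0 0).re + (M 1 1).re) / 2 * hFun sx
          + ((1 - (M 0 0).re) + (1 - (M 1 1).re)) / 2 * hFun sx := by ring
      _ ≤ _ := add_le_add b1 b2
  -- conclude
  have g1 := gFun_sq_le hNz1 hsz0 hsz1 hNz_ge
  have g2 := gFun_sq_le hNx1 hsx0 hsx1 hNx_ge
  exact le_trans (add_le_add g1 g2) hs_sum
end

section
/- Let (M_m)_m be a POVM on ℂ² with elements M_m = p_m·(I + k_m·(n_m·σ)), where p_m ≥ 0, k_m ∈ [−1,1], n_m ∈ ℝ³ unit vectors, Σ_m p_m = 1 and Σ_m p_m k_m n_m = 0. Let √M_m denote the positive semidefinite square root of M_m, let x̂ = (1,0,0), and let ρ_± = (1/2)·(I ± x̂·σ). Then Σ_m √M_m ρ_± √M_m = (1/2)·(I + r_±·σ), where r_± = ±Σ_m p_m·[(n_m·x̂)·n_m + √(1 − k_m²)·(x̂ − (n_m·x̂)·n_m)]. -/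
open Matrix
open scoped ComplexOrder

noncomputable section

/-- The positive semidefinite square root of a positive semidefinite matrix
(the former Mathlib `Matrix.PosSemidef.sqrt`, spelled out). -/
def Matrix.PosSemidef.sqrt {n : Type*} [Fintype n] [DecidableEq n] {A : Matrix n n ℂ}
    (hA : A.PosSemidef) : Matrix n n ℂ :=
  (hA.1.eigenvectorUnitary : Matrix n n ℂ) * diagonal ((↑) ∘ Real.sqrt ∘ hA.1.eigenvalues) *
    (star hA.1.eigenvectorUnitary : Matrix n n ℂ)

end

section Helpers

lemma vecσ_add (v w : Fin 3 → ℝ) : vecσ (v + w) = vecσ v + vecσ w := by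
  unfold vecσ; simp only [Pi.add_apply]; push_cast; module
lemma vecσ_zero : vecσ 0 = 0 := by unfold vecσ; simp

lemma vecσ_sum {ι : Type*} [Fintype ι] (f : ι → Fin 3 → ℝ) :
    vecσ (∑ m, f m) = ∑ m, vecσ (f m) := by
  classical
  induction (Finset.univ : Finset ι) using Finset.induction with
  | empty => simpa using vecσ_zero
  | insert _ _ h ih => rw [Finset.sum_insert h, Finset.sum_insert h, vecσ_add, ih]

-- mul_self lemma
lemma vecσ_mul_self (v : Fin 3 → ℝ) (h : ∑ i, v i ^ 2 = 1) : vecσ v * vecσ v = 1 := by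
  have hC : (v 0 : ℂ)^2 + (v 1)^2 + (v 2)^2 = 1 := by
    rw [Fin.sum_univ_three] at h; exact_mod_cast h
  unfold vecσ σx σy σz
  ext i j
  fin_cases i <;> fin_cases j <;>
    simp [Matrix.mul_apply, Fin.sum_univ_two, Matrix.one_apply] <;>
    first
    | linear_combination -hC + (v 1 : ℂ)^2 * Complex.I_sq
    | linear_combination hC - (v 1 : ℂ)^2 * Complex.I_sq
    | ring

lemma σx_anticomm (v : Fin 3 → ℝ) :
    σx * vecσ v + vecσ v * σx = ((2 * v 0 : ℝ) : ℂ) • 1 := by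
  unfold vecσ σx σy σz
  ext i j
  fin_cases i <;> fin_cases j <;>
    simp [Matrix.mul_apply, Fin.sum_univ_two, Matrix.one_apply] <;> ring

lemma mul_lin (N : Matrix (Fin 2) (Fin 2) ℂ) (hN2 : N * N = 1) (x y x' y' : ℂ) :
    (x • 1 + y • N) * (x' • 1 + y' • N)
      = (x * x' + y * y') • 1 + (x * y' + y * x') • N := by
  simp only [add_mul, mul_add, smul_mul_assoc, mul_smul_comm, one_mul, mul_one, smul_smul, hN2]
  module

lemma eq_sub' {M : Type*} [AddCommGroup M] {a b c : M} (h : c + a = b) : a = b - c :=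
  eq_sub_iff_add_eq'.mpr h

lemma core (N X : Matrix (Fin 2) (Fin 2) ℂ) (hN2 : N * N = 1) (c : ℂ)
    (hA : X * N + N * X = c • 1) (u w : ℂ) :
    (u • 1 + w • N) * X * (u • 1 + w • N)
      = (u * w * c) • 1 + (u ^ 2 - w ^ 2) • X + (w ^ 2 * c) • N := by
  have hNX : N * X = c • 1 - X * N := eq_sub' hA
  have h1 : (u • (1 : Matrix (Fin 2) (Fin 2) ℂ) + w • N) * X = u • X + w • (N * X) := by
    simp [add_mul, smul_mul_assoc]
  have h3 : N * X * N = c • N - X := by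
    rw [hNX, sub_mul, smul_mul_assoc, one_mul, mul_assoc, hN2, mul_one]
  have h2 : (u • X + w • (N * X)) * (u • 1 + w • N)
      = (u*u) • X + (u*w) • (X*N) + (w*u) • (N*X) + (w*w) • (N*X*N) := by
    simp only [add_mul, mul_add, smul_mul_assoc, mul_smul_comm, mul_one, smul_smul, mul_assoc]
    module
  rw [h1, h2, h3, hNX]
  module

lemma vecσ_smul (c : ℝ) (v : Fin 3 → ℝ) : vecσ (c • v) = (c : ℂ) • vecσ v := by
  unfold vecσ; simp only [Pi.smul_apply, smul_eq_mul]; push_cast; module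

lemma vecσ_sub (v w : Fin 3 → ℝ) : vecσ (v - w) = vecσ v - vecσ w := by
  unfold vecσ; simp only [Pi.sub_apply]; push_cast; module

lemma vecσ_neg (v : Fin 3 → ℝ) : vecσ (-v) = -vecσ v := by
  unfold vecσ; simp only [Pi.neg_apply]; push_cast; module

lemma vecσ_x : vecσ ![1,0,0] = σx := by
  unfold vecσ; norm_num
  left; rfl

lemma vecσ_herm (v : Fin 3 → ℝ) : (vecσ v)ᴴ = vecσ v := by
  unfold vecσ σx σy σz
  ext i j; fin_cases i <;> fin_cases j <;>
    simp [conjTranspose_apply, Complex.conj_ofReal]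

open scoped MatrixOrder in
lemma psd_eq_sqrt_of_sq_eq {S A : Matrix (Fin 2) (Fin 2) ℂ} (hS : S.PosSemidef)
    (hA : A.PosSemidef) (h : S ^ 2 = A) : S = hA.sqrt := by
  have hsq : hA.sqrt = CFC.sqrt A := by
    rw [CFC.sqrt_eq_cfc, cfc_nnreal_eq_real _ A, hA.1.cfc_eq]
    simp only [IsHermitian.cfc, Matrix.PosSemidef.sqrt, Unitary.conjStarAlgAut_apply, Real.coe_sqrt,
      Real.coe_toNNReal']
    congr 3
    funext i
    simp [hA.eigenvalues_nonneg i]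
  rw [hsq]
  exact (CFC.sqrt_unique (by rw [← sq]; exact h) hS.nonneg).symm

lemma perM (P K : ℝ) (nn : Fin 3 → ℝ) (hP : 0 ≤ P) (hK : -1 ≤ K) (hK' : K ≤ 1)
    (hnn : ∑ i, nn i ^ 2 = 1) (M : Matrix (Fin 2) (Fin 2) ℂ)
    (hM : M = (P : ℂ) • (1 + (K : ℂ) • vecσ nn)) (hpsd : M.PosSemidef) :
    (hpsd.sqrt * ((1/2 : ℂ) • (1 + σx)) * hpsd.sqrt
      = (((P + P*K*nn 0)/2 : ℝ) : ℂ) • 1 + (1/2 : ℂ) • vecσ ((P*K) • nn +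
          P • ((nn 0) • nn + Real.sqrt (1 - K^2) • ((![1,0,0] : Fin 3 → ℝ) - (nn 0) • nn))))
    ∧ (hpsd.sqrt * ((1/2 : ℂ) • (1 - σx)) * hpsd.sqrt
      = (((P - P*K*nn 0)/2 : ℝ) : ℂ) • 1 + (1/2 : ℂ) • vecσ ((P*K) • nn -
          P • ((nn 0) • nn + Real.sqrt (1 - K^2) • ((![1,0,0] : Fin 3 → ℝ) - (nn 0) • nn)))) := by
  set N := vecσ nn with hNdef
  have hN2 : N * N = 1 := vecσ_mul_self nn hnn
  set a := Real.sqrt (P*(1+K)) with hadef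
  set b := Real.sqrt (P*(1-K)) with hbdef
  have ha0 : 0 ≤ a := Real.sqrt_nonneg _
  have hb0 : 0 ≤ b := Real.sqrt_nonneg _
  have ha2 : a^2 = P*(1+K) := Real.sq_sqrt (by nlinarith)
  have hb2 : b^2 = P*(1-K) := Real.sq_sqrt (by nlinarith)
  set u := (a+b)/2 with hudef
  set w := (a-b)/2 with hwdef
  set Q := Real.sqrt (1 - K^2) with hQdef
  have hu2 : u^2 + w^2 = P := by rw [hudef, hwdef]; linear_combination ha2/2 + hb2/2
  have h2uw : 2*u*w = P*K := by rw [hudef, hwdef]; linear_combination ha2/2 - hb2/2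
  have hab : a*b = P*Q := by
    rw [hadef, hbdef, ← Real.sqrt_mul (by nlinarith),
      show P*(1+K)*(P*(1-K)) = P^2*(1-K^2) by ring,
      Real.sqrt_mul (sq_nonneg P), Real.sqrt_sq hP]
  have huw : u^2 - w^2 = P*Q := by rw [hudef, hwdef]; linear_combination hab
  set S : Matrix (Fin 2) (Fin 2) ℂ := (u : ℂ) • 1 + (w : ℂ) • N with hSdef
  -- S is PSD
  have hNh : Nᴴ = N := vecσ_herm nn
  set c' := ((Real.sqrt a + Real.sqrt b)/2 : ℝ) with hc'def
  set d' := ((Real.sqrt a - Real.sqrt b)/2 : ℝ) with hd'def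
  set R : Matrix (Fin 2) (Fin 2) ℂ := (c' : ℂ) • 1 + (d' : ℂ) • N with hRdef
  have hRh : Rᴴ = R := by
    rw [hRdef, conjTranspose_add, conjTranspose_smul, conjTranspose_smul, conjTranspose_one, hNh]
    simp [Complex.conj_ofReal]
  have e1r : c'*c' + d'*d' = u := by
    rw [hc'def, hd'def, hudef]
    linear_combination (Real.mul_self_sqrt ha0)/2 + (Real.mul_self_sqrt hb0)/2
  have e2r : c'*d' + d'*c' = w := by
    rw [hc'def, hd'def, hwdef]
    linear_combination (Real.mul_self_sqrt ha0)/2 - (Real.mul_self_sqrt hb0)/2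
  have hRR : R * R = S := by
    rw [hRdef, mul_lin N hN2, hSdef]
    have e1 : (c' : ℂ)*c' + d'*d' = (u : ℂ) := by exact_mod_cast e1r
    have e2 : (c' : ℂ)*d' + d'*c' = (w : ℂ) := by exact_mod_cast e2r
    rw [e1, e2]
  have hSpsd : S.PosSemidef := by
    have := Matrix.posSemidef_conjTranspose_mul_self R
    rwa [hRh, hRR] at this
  have hSS : S * S = M := by
    rw [hSdef, mul_lin N hN2, hM]
    have e1 : (u : ℂ)*u + w*w = (P : ℂ) := by exact_mod_cast (by linear_combination hu2 : u*u + w*w = P)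
    have e2 : (u : ℂ)*w + w*u = ((P*K : ℝ) : ℂ) := by exact_mod_cast (by linear_combination h2uw : u*w + w*u = P*K)
    rw [e1, e2, smul_add, smul_smul]
    push_cast
    rfl
  have hSsqrt : S = hpsd.sqrt := psd_eq_sqrt_of_sq_eq hSpsd hpsd (by rw [sq, hSS])
  have hM2 : M = (P : ℂ) • 1 + ((P*K : ℝ) : ℂ) • N := by
    rw [hM, smul_add, smul_smul]; push_cast; rfl
  have hSS2 : S * S = (P : ℂ) • 1 + ((P*K : ℝ) : ℂ) • N := by rw [hSS, hM2]
  have C1 : (u : ℂ)^2 + (w : ℂ)^2 = (P : ℂ) := by exact_mod_cast hu2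
  have C2 : 2*(u : ℂ)*(w : ℂ) = (P : ℂ)*(K : ℂ) := by exact_mod_cast h2uw
  have C3 : (u : ℂ)^2 - (w : ℂ)^2 = (P : ℂ)*(Q : ℂ) := by exact_mod_cast huw
  have hAc : σx * N + N * σx = ((2*nn 0 : ℝ) : ℂ) • 1 := σx_anticomm nn
  have hXS := core N σx hN2 _ hAc (u : ℂ) (w : ℂ)
  rw [← hSsqrt]
  constructor
  · have expand : S * ((1/2 : ℂ) • (1 + σx)) * S = (1/2 : ℂ) • (S*S + S*σx*S) := by
      simp only [mul_smul_comm, smul_mul_assoc, mul_add, add_mul, mul_one]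
    rw [expand, hSS2, hXS, vecσ_add, vecσ_smul, vecσ_smul, vecσ_add, vecσ_smul, vecσ_smul,
      vecσ_sub, vecσ_smul, vecσ_x]
    match_scalars
    · push_cast; linear_combination ((nn 0 : ℂ))/2 * C2
    · push_cast
      linear_combination ((nn 0 : ℂ)/2) * C1 - ((nn 0 : ℂ)/2) * C3
    · push_cast
      linear_combination (1/2 : ℂ) * C3
  · have expand : S * ((1/2 : ℂ) • (1 - σx)) * S = (1/2 : ℂ) • (S*S - S*σx*S) := by
      simp only [mul_smul_comm, smul_mul_assoc, mul_sub, sub_mul, mul_one]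
    rw [expand, hSS2, hXS, vecσ_sub, vecσ_smul, vecσ_smul, vecσ_add, vecσ_smul, vecσ_smul,
      vecσ_sub, vecσ_smul, vecσ_x]
    match_scalars
    · push_cast; linear_combination (-(nn 0 : ℂ))/2 * C2
    · push_cast
      linear_combination -((nn 0 : ℂ)/2) * C1 + ((nn 0 : ℂ)/2) * C3
    · push_cast
      linear_combination (-1/2 : ℂ) * C3


end Helpers
/-- For a POVM with elements `M_m = p_m·(I + k_m·(n_m·σ))` and `ρ_± = (1/2)(I ± x̂·σ)`, the
Lüders post-measurement states satisfy `Σ_m √M_m ρ_± √M_m = (1/2)(I + r_±·σ)` with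
`r_± = ±Σ_m p_m·[(n_m·x̂)n_m + √(1−k_m²)(x̂ − (n_m·x̂)n_m)]`. -/
theorem stmt_12 {ι : Type*} [Fintype ι] (p k : ι → ℝ) (n : ι → Fin 3 → ℝ)
    (hp : ∀ m, 0 ≤ p m) (hk : ∀ m, k m ∈ Set.Icc (-1 : ℝ) 1)
    (hn : ∀ m, ∑ i, n m i ^ 2 = 1)
    (hpsum : ∑ m, p m = 1) (hpkn : ∀ i, ∑ m, p m * k m * n m i = 0)
    (M : ι → Matrix (Fin 2) (Fin 2) ℂ)
    (hMdef : ∀ m, M m = (p m : ℂ) • (1 + (k m : ℂ) • vecσ (n m)))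
    (hPSD : ∀ m, (M m).PosSemidef)
    (r : Fin 3 → ℝ)
    (hr : r = ∑ m, p m • ((∑ i, n m i * (![1, 0, 0] : Fin 3 → ℝ) i) • n m +
        Real.sqrt (1 - k m ^ 2) •
          ((![1, 0, 0] : Fin 3 → ℝ) - (∑ i, n m i * (![1, 0, 0] : Fin 3 → ℝ) i) • n m))) :
    (∑ m, (hPSD m).sqrt * ((1 / 2 : ℂ) • (1 + σx)) * (hPSD m).sqrt
        = (1 / 2 : ℂ) • (1 + vecσ r)) ∧
    (∑ m, (hPSD m).sqrt * ((1 / 2 : ℂ) • (1 - σx)) * (hPSD m).sqrt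
        = (1 / 2 : ℂ) • (1 + vecσ (-r))) := by
  classical
  set f : ι → Fin 3 → ℝ := fun m =>
    p m • ((n m 0) • n m + Real.sqrt (1 - k m ^ 2) •
      ((![1,0,0] : Fin 3 → ℝ) - (n m 0) • n m)) with hfdef
  have hip : ∀ m, (∑ i, n m i * (![1,0,0] : Fin 3 → ℝ) i) = n m 0 := by
    intro m; simp [Fin.sum_univ_three]
  have hrf : r = ∑ m, f m := by
    rw [hr]; apply Finset.sum_congr rfl; intro m _; rw [hip m, hfdef]
  have hpk0 : (∑ m, (p m * k m) • n m) = 0 := by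
    funext i
    simp only [Finset.sum_apply, Pi.smul_apply, smul_eq_mul, Pi.zero_apply]
    exact hpkn i
  have key := fun m => perM (p m) (k m) (n m) (hp m) (hk m).1 (hk m).2 (hn m) (M m)
    (hMdef m) (hPSD m)
  constructor
  · have e : ∀ m, (hPSD m).sqrt * ((1/2 : ℂ) • (1 + σx)) * (hPSD m).sqrt
        = (((p m + p m*k m*n m 0)/2 : ℝ) : ℂ) • 1 + (1/2 : ℂ) • vecσ ((p m*k m) • n m + f m) :=
      fun m => (key m).1
    simp only [e]
    rw [Finset.sum_add_distrib, ← Finset.sum_smul, ← Finset.smul_sum, ← vecσ_sum]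
    have hc : (∑ m, (((p m + p m*k m*n m 0)/2 : ℝ) : ℂ)) = (1/2 : ℂ) := by
      have : (∑ m, ((p m + p m*k m*n m 0)/2)) = 1/2 := by
        rw [← Finset.sum_div, Finset.sum_add_distrib, hpsum, hpkn 0]; norm_num
      rw [← Complex.ofReal_sum, this]
      norm_num
    have hg : (∑ m, ((p m*k m) • n m + f m)) = r := by
      rw [Finset.sum_add_distrib, hpk0, hrf, zero_add]
    rw [hc, hg, smul_add]
  · have e : ∀ m, (hPSD m).sqrt * ((1/2 : ℂ) • (1 - σx)) * (hPSD m).sqrt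
        = (((p m - p m*k m*n m 0)/2 : ℝ) : ℂ) • 1 + (1/2 : ℂ) • vecσ ((p m*k m) • n m - f m) :=
      fun m => (key m).2
    simp only [e]
    rw [Finset.sum_add_distrib, ← Finset.sum_smul, ← Finset.smul_sum, ← vecσ_sum]
    have hc : (∑ m, (((p m - p m*k m*n m 0)/2 : ℝ) : ℂ)) = (1/2 : ℂ) := by
      have : (∑ m, ((p m - p m*k m*n m 0)/2)) = 1/2 := by
        rw [← Finset.sum_div, Finset.sum_sub_distrib, hpsum, hpkn 0]; norm_num
      rw [← Complex.ofReal_sum, this]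
      norm_num
    have hg : (∑ m, ((p m*k m) • n m - f m)) = -r := by
      rw [Finset.sum_sub_distrib, hpk0, hrf, zero_sub]
    rw [hc, hg, smul_add]
end
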